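/- arXiv:2108.12713 — 3 statements merged into one kernel-verified Lean document; each statement's English description precedes it below -/
import Mathlib

section
/- Let p be a prime and let B = F_p[ξ_1, ξ_2, …] be the polynomial F_p-algebra on variables ξ_n (n ≥ 1), with ξ_0 = 1. Then: (1) there is a unique F_p-algebra homomorphism Δ : B → B ⊗_{F_p} B with Δ(ξ_n) = Σ_{k=0}^{n} ξ_{n−k}^{p^k} ⊗ ξ_k for all n ≥ 1; (2) Δ is coassociative and is counital for the F_p-algebra homomorphism ε : B → F_p with ε(ξ_n) = 0 for n ≥ 1; and (3) the bialgebra (B, Δ, ε) admits a (necessarily unique) antipode χ : B → B, i.e. an F_p-linear map with m ∘ (χ ⊗ id) ∘ Δ = η ∘ ε = m ∘ (id ⊗ χ) ∘ Δ, so that B is a commutative Hopf algebra over F_p. -/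
open TensorProduct

/-- `B = F_p[ξ_1, ξ_2, …]`, the polynomial algebra over `F_p` on countably many
variables; the variable `X (n-1)` of `MvPolynomial ℕ (ZMod p)` plays the role of `ξ_n`,
and `ξ_0 = 1`. -/
noncomputable def milnorXi (p : ℕ) (n : ℕ) : MvPolynomial ℕ (ZMod p) :=
  if n = 0 then 1 else MvPolynomial.X (n - 1)

/-- The value `Δ(ξ_n) = Σ_{k=0}^{n} ξ_{n−k}^{p^k} ⊗ ξ_k` of the Milnor coproduct on the
generator `ξ_n`. -/
noncomputable def milnorCoprodVal (p n : ℕ) :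
    MvPolynomial ℕ (ZMod p) ⊗[ZMod p] MvPolynomial ℕ (ZMod p) :=
  ∑ k ∈ Finset.range (n + 1),
    ((milnorXi p (n - k)) ^ (p ^ k)) ⊗ₜ[ZMod p] (milnorXi p k)

set_option linter.unusedSectionVars false
set_option maxHeartbeats 1000000
set_option synthInstance.maxHeartbeats 1000000

namespace MilnorAux
open MvPolynomial Finset

/-- Values of the left antipode on the generators. -/
noncomputable def lc (p : ℕ) : ℕ → MvPolynomial ℕ (ZMod p)
  | 0 => 1
  | (n+1) => -∑ k ∈ (Finset.range (n+1)).attach,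
      (lc p k.1) ^ (p ^ (n + 1 - k.1)) * milnorXi p (n + 1 - k.1)
decreasing_by exact Finset.mem_range.mp k.2

/-- Values of the right antipode on the generators. -/
noncomputable def rc (p : ℕ) : ℕ → MvPolynomial ℕ (ZMod p)
  | 0 => 1
  | (n+1) => -∑ k ∈ (Finset.range (n+1)).attach,
      (milnorXi p (n + 1 - k.1)) ^ (p ^ k.1) * rc p k.1
decreasing_by exact Finset.mem_range.mp k.2

variable {p : ℕ} [hp : Fact p.Prime]

theorem xi_zero : milnorXi p 0 = 1 := rfl

theorem xi_succ (n : ℕ) : milnorXi p (n + 1) = X n := rfl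

theorem cv_zero : milnorCoprodVal p 0 = 1 := by
  simp [milnorCoprodVal, milnorXi, Algebra.TensorProduct.one_def]

theorem delta_xi (Δ : MvPolynomial ℕ (ZMod p) →ₐ[ZMod p]
      (MvPolynomial ℕ (ZMod p) ⊗[ZMod p] MvPolynomial ℕ (ZMod p)))
    (hΔ : ∀ n : ℕ, 1 ≤ n → Δ (milnorXi p n) = milnorCoprodVal p n) (m : ℕ) :
    Δ (milnorXi p m) = milnorCoprodVal p m := by
  cases m with
  | zero => simpa [xi_zero, cv_zero] using map_one Δ
  | succ n => exact hΔ _ (Nat.succ_le_succ (Nat.zero_le n))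

theorem eps_xi (ε : MvPolynomial ℕ (ZMod p) →ₐ[ZMod p] ZMod p)
    (hε : ∀ n : ℕ, 1 ≤ n → ε (milnorXi p n) = 0) (m : ℕ) :
    ε (milnorXi p m) = if m = 0 then 1 else 0 := by
  cases m with
  | zero => simpa [xi_zero] using map_one ε
  | succ n => simpa using hε _ (Nat.succ_le_succ (Nat.zero_le n))

theorem cv_pow (m k : ℕ) :
    (milnorCoprodVal p m) ^ (p ^ k) =
      ∑ j ∈ Finset.range (m + 1),
        ((milnorXi p (m - j)) ^ (p ^ (j + k))) ⊗ₜ[ZMod p] ((milnorXi p j) ^ (p ^ k)) := by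
  haveI : CharP (MvPolynomial ℕ (ZMod p) ⊗[ZMod p] MvPolynomial ℕ (ZMod p)) p :=
    charP_of_injective_algebraMap' (ZMod p) p
  haveI : ExpChar (MvPolynomial ℕ (ZMod p) ⊗[ZMod p] MvPolynomial ℕ (ZMod p)) p :=
    .prime hp.out
  rw [milnorCoprodVal, sum_pow_char_pow]
  refine Finset.sum_congr rfl fun j _ => ?_
  rw [Algebra.TensorProduct.tmul_pow, ← pow_mul, ← pow_add]

theorem coassoc_cv
    (Δ : MvPolynomial ℕ (ZMod p) →ₐ[ZMod p]
      (MvPolynomial ℕ (ZMod p) ⊗[ZMod p] MvPolynomial ℕ (ZMod p)))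
    (hΔ : ∀ m : ℕ, Δ (milnorXi p m) = milnorCoprodVal p m) (N : ℕ) :
    (Algebra.TensorProduct.assoc (ZMod p) (ZMod p) (ZMod p) (MvPolynomial ℕ (ZMod p))
        (MvPolynomial ℕ (ZMod p)) (MvPolynomial ℕ (ZMod p)))
      ((Algebra.TensorProduct.map Δ (AlgHom.id (ZMod p) (MvPolynomial ℕ (ZMod p))))
        (milnorCoprodVal p N)) =
    (Algebra.TensorProduct.map (AlgHom.id (ZMod p) (MvPolynomial ℕ (ZMod p))) Δ)
      (milnorCoprodVal p N) := by
  conv_lhs => rw [milnorCoprodVal]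
  conv_rhs => rw [milnorCoprodVal]
  rw [map_sum, map_sum, map_sum]
  calc
    ∑ k ∈ range (N + 1),
        (Algebra.TensorProduct.assoc (ZMod p) (ZMod p) (ZMod p) _ _ _)
          ((Algebra.TensorProduct.map Δ (AlgHom.id (ZMod p) _))
            (((milnorXi p (N - k)) ^ (p ^ k)) ⊗ₜ[ZMod p] milnorXi p k))
      = ∑ k ∈ range (N + 1), ∑ j ∈ range (N - k + 1),
          ((milnorXi p (N - k - j)) ^ (p ^ (j + k))) ⊗ₜ[ZMod p]
            (((milnorXi p j) ^ (p ^ k)) ⊗ₜ[ZMod p] milnorXi p k) := by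
        refine Finset.sum_congr rfl fun k _ => ?_
        rw [Algebra.TensorProduct.map_tmul, map_pow, hΔ, AlgHom.coe_id, id_eq,
          cv_pow, TensorProduct.sum_tmul, map_sum]
        exact Finset.sum_congr rfl fun j _ => by rw [Algebra.TensorProduct.assoc_tmul]
    _ = ∑ i ∈ range (N + 1), ∑ k ∈ range (i + 1),
          ((milnorXi p (N - i)) ^ (p ^ i)) ⊗ₜ[ZMod p]
            (((milnorXi p (i - k)) ^ (p ^ k)) ⊗ₜ[ZMod p] milnorXi p k) := by
        rw [Finset.sum_sigma', Finset.sum_sigma']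
        refine Finset.sum_nbij' (fun x => ⟨x.1 + x.2, x.1⟩) (fun x => ⟨x.2, x.1 - x.2⟩)
          ?_ ?_ ?_ ?_ ?_
        · rintro ⟨k, j⟩ ha
          simp only [Finset.mem_sigma, Finset.mem_range] at ha ⊢
          omega
        · rintro ⟨i, k⟩ ha
          simp only [Finset.mem_sigma, Finset.mem_range] at ha ⊢
          omega
        · rintro ⟨k, j⟩ ha
          simp
        · rintro ⟨i, k⟩ ha
          simp only [Finset.mem_sigma, Finset.mem_range] at ha
          have h : k + (i - k) = i := by omega
          simp [h]
        · rintro ⟨k, j⟩ ha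
          simp only [Finset.mem_sigma, Finset.mem_range] at ha
          have h1 : N - k - j = N - (k + j) := by omega
          have h2 : j + k = k + j := by omega
          have h3 : k + j - k = j := by omega
          rw [h1, h2, h3]
    _ = ∑ i ∈ range (N + 1),
          (Algebra.TensorProduct.map (AlgHom.id (ZMod p) _) Δ)
            (((milnorXi p (N - i)) ^ (p ^ i)) ⊗ₜ[ZMod p] milnorXi p i) := by
        refine Finset.sum_congr rfl fun i _ => ?_
        rw [Algebra.TensorProduct.map_tmul, hΔ, AlgHom.coe_id, id_eq,
          milnorCoprodVal, TensorProduct.tmul_sum]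

theorem counit_cv_left (ε : MvPolynomial ℕ (ZMod p) →ₐ[ZMod p] ZMod p)
    (hε : ∀ m : ℕ, ε (milnorXi p m) = if m = 0 then 1 else 0) (N : ℕ) :
    (Algebra.TensorProduct.lid (ZMod p) (MvPolynomial ℕ (ZMod p)))
      ((Algebra.TensorProduct.map ε (AlgHom.id (ZMod p) (MvPolynomial ℕ (ZMod p))))
        (milnorCoprodVal p N)) = milnorXi p N := by
  rw [milnorCoprodVal, map_sum, map_sum, Finset.sum_eq_single N]
  · rw [Algebra.TensorProduct.map_tmul, map_pow, hε]
    simp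
  · intro k hk hkN
    rw [Finset.mem_range] at hk
    rw [Algebra.TensorProduct.map_tmul, map_pow, hε, if_neg (by omega : ¬(N - k = 0)),
      zero_pow (pow_pos hp.out.pos k).ne', TensorProduct.zero_tmul, map_zero]
  · intro h
    exact absurd (Finset.self_mem_range_succ N) h

theorem counit_cv_right (ε : MvPolynomial ℕ (ZMod p) →ₐ[ZMod p] ZMod p)
    (hε : ∀ m : ℕ, ε (milnorXi p m) = if m = 0 then 1 else 0) (N : ℕ) :
    (Algebra.TensorProduct.rid (ZMod p) (ZMod p) (MvPolynomial ℕ (ZMod p)))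
      ((Algebra.TensorProduct.map (AlgHom.id (ZMod p) (MvPolynomial ℕ (ZMod p))) ε)
        (milnorCoprodVal p N)) = milnorXi p N := by
  rw [milnorCoprodVal, map_sum, map_sum, Finset.sum_eq_single 0]
  · rw [Algebra.TensorProduct.map_tmul, hε]
    simp
  · intro k hk hk0
    rw [Algebra.TensorProduct.map_tmul, hε, if_neg hk0, TensorProduct.tmul_zero, map_zero]
  · intro h
    exact absurd (Finset.mem_range.mpr (by omega)) h

local notation "Bp" => MvPolynomial ℕ (ZMod p)

theorem lc_succ (n : ℕ) :
    lc p (n + 1) = -∑ k ∈ Finset.range (n + 1),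
      (lc p k) ^ (p ^ (n + 1 - k)) * milnorXi p (n + 1 - k) := by
  rw [lc]
  exact congrArg Neg.neg (Finset.sum_attach (Finset.range (n+1))
    (fun k => (lc p k) ^ (p ^ (n + 1 - k)) * milnorXi p (n + 1 - k)))

theorem rc_succ (n : ℕ) :
    rc p (n + 1) = -∑ k ∈ Finset.range (n + 1),
      (milnorXi p (n + 1 - k)) ^ (p ^ k) * rc p k := by
  rw [rc]
  exact congrArg Neg.neg (Finset.sum_attach (Finset.range (n+1))
    (fun k => (milnorXi p (n + 1 - k)) ^ (p ^ k) * rc p k))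

theorem lc_sum (N : ℕ) (hN : 1 ≤ N) :
    ∑ k ∈ Finset.range (N + 1), (lc p (N - k)) ^ (p ^ k) * milnorXi p k = 0 := by
  obtain ⟨n, rfl⟩ : ∃ n, N = n + 1 := ⟨N - 1, by omega⟩
  rw [Finset.sum_range_succ']
  have h0 : (lc p (n + 1 - 0)) ^ (p ^ 0) * milnorXi p 0 = lc p (n + 1) := by
    simp [milnorXi]
  rw [h0, lc_succ]
  have : ∑ i ∈ Finset.range (n + 1),
      (lc p (n + 1 - (i + 1))) ^ (p ^ (i + 1)) * milnorXi p (i + 1) =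
      ∑ k ∈ Finset.range (n + 1),
      (lc p k) ^ (p ^ (n + 1 - k)) * milnorXi p (n + 1 - k) := by
    refine Finset.sum_nbij' (fun i => n - i) (fun j => n - j) ?_ ?_ ?_ ?_ ?_ <;>
      intro a ha <;> rw [Finset.mem_range] at ha
    · rw [Finset.mem_range]; omega
    · rw [Finset.mem_range]; omega
    · omega
    · omega
    · have h1 : n + 1 - (a + 1) = n - a := by omega
      have h2 : n + 1 - (n - a) = a + 1 := by omega
      rw [h1, h2]
  rw [this]
  exact add_neg_cancel _

theorem rc_sum (N : ℕ) (hN : 1 ≤ N) :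
    ∑ k ∈ Finset.range (N + 1), (milnorXi p (N - k)) ^ (p ^ k) * rc p k = 0 := by
  obtain ⟨n, rfl⟩ : ∃ n, N = n + 1 := ⟨N - 1, by omega⟩
  rw [Finset.sum_range_succ]
  have h0 : (milnorXi p (n + 1 - (n + 1))) ^ (p ^ (n + 1)) * rc p (n + 1) = rc p (n + 1) := by
    simp [milnorXi]
  rw [h0, rc_succ]
  exact add_neg_cancel _

theorem mapA_coe {R A B C D : Type*} [CommSemiring R] [Semiring A] [Semiring B]
    [Semiring C] [Semiring D] [Algebra R A] [Algebra R B] [Algebra R C] [Algebra R D]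
    (f : A →ₐ[R] C) (g : B →ₐ[R] D) (t : A ⊗[R] B) :
    Algebra.TensorProduct.map f g t = TensorProduct.map f.toLinearMap g.toLinearMap t := by
  induction t using TensorProduct.induction_on with
  | zero => simp
  | tmul a b => rfl
  | add s1 s2 h1 h2 => rw [map_add, map_add, h1, h2]

theorem assocA_coe (t : (Bp ⊗[ZMod p] Bp) ⊗[ZMod p] Bp) :
    (Algebra.TensorProduct.assoc (ZMod p) (ZMod p) (ZMod p) Bp Bp Bp) t =
      (TensorProduct.assoc (ZMod p) Bp Bp Bp) t := rfl

theorem ridA_coe (t : Bp ⊗[ZMod p] (ZMod p)) :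
    (Algebra.TensorProduct.rid (ZMod p) (ZMod p) Bp) t =
      (TensorProduct.rid (ZMod p) Bp) t := by
  rw [← TensorProduct.AlgebraTensorModule.rid_eq_rid]
  rfl

theorem lidA_coe (t : (ZMod p) ⊗[ZMod p] Bp) :
    (Algebra.TensorProduct.lid (ZMod p) Bp) t =
      (TensorProduct.lid (ZMod p) Bp) t := rfl

/-- Convolution product on linear endomorphisms of `B`. -/
noncomputable def conv (Δ : Bp →ₐ[ZMod p] (Bp ⊗[ZMod p] Bp))
    (f g : Bp →ₗ[ZMod p] Bp) : Bp →ₗ[ZMod p] Bp :=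
  (LinearMap.mul' (ZMod p) Bp) ∘ₗ (TensorProduct.map f g) ∘ₗ Δ.toLinearMap

theorem conv_apply (Δ : Bp →ₐ[ZMod p] (Bp ⊗[ZMod p] Bp)) (f g : Bp →ₗ[ZMod p] Bp)
    (x : Bp) :
    conv Δ f g x = LinearMap.mul' (ZMod p) Bp (TensorProduct.map f g (Δ x)) := rfl

/-- The convolution unit `η ∘ ε`. -/
noncomputable def uMap (ε : Bp →ₐ[ZMod p] ZMod p) : Bp →ₗ[ZMod p] Bp :=
  (Algebra.linearMap (ZMod p) Bp) ∘ₗ ε.toLinearMap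

theorem uMap_apply (ε : Bp →ₐ[ZMod p] ZMod p) (x : Bp) :
    uMap ε x = algebraMap (ZMod p) Bp (ε x) := rfl

theorem conv_unit_left (Δ : Bp →ₐ[ZMod p] (Bp ⊗[ZMod p] Bp))
    (ε : Bp →ₐ[ZMod p] ZMod p)
    (hεl : ∀ x : Bp, (TensorProduct.lid (ZMod p) Bp)
      ((Algebra.TensorProduct.map ε (AlgHom.id (ZMod p) Bp)) (Δ x)) = x)
    (f : Bp →ₗ[ZMod p] Bp) : conv Δ (uMap ε) f = f := by
  apply LinearMap.ext; intro x
  have key : ∀ t : Bp ⊗[ZMod p] Bp,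
      LinearMap.mul' (ZMod p) Bp (TensorProduct.map (uMap ε) f t) =
      f ((TensorProduct.lid (ZMod p) Bp)
        (TensorProduct.map ε.toLinearMap LinearMap.id t)) := by
    intro t
    induction t using TensorProduct.induction_on with
    | zero => simp
    | tmul a b =>
      simp only [TensorProduct.map_tmul, LinearMap.mul'_apply, uMap_apply,
        TensorProduct.lid_tmul, LinearMap.id_coe, id_eq, AlgHom.toLinearMap_apply,
        map_smul]
      rw [Algebra.smul_def]
    | add s1 s2 h1 h2 => simp only [map_add, h1, h2]
  rw [conv_apply, key]
  have h := hεl x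
  rw [mapA_coe] at h
  simp only [AlgHom.toLinearMap_id] at h
  rw [h]

theorem conv_unit_right (Δ : Bp →ₐ[ZMod p] (Bp ⊗[ZMod p] Bp))
    (ε : Bp →ₐ[ZMod p] ZMod p)
    (hεr : ∀ x : Bp, (TensorProduct.rid (ZMod p) Bp)
      ((Algebra.TensorProduct.map (AlgHom.id (ZMod p) Bp) ε) (Δ x)) = x)
    (f : Bp →ₗ[ZMod p] Bp) : conv Δ f (uMap ε) = f := by
  apply LinearMap.ext; intro x
  have key : ∀ t : Bp ⊗[ZMod p] Bp,
      LinearMap.mul' (ZMod p) Bp (TensorProduct.map f (uMap ε) t) =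
      f ((TensorProduct.rid (ZMod p) Bp)
        (TensorProduct.map LinearMap.id ε.toLinearMap t)) := by
    intro t
    induction t using TensorProduct.induction_on with
    | zero => simp
    | tmul a b =>
      simp only [TensorProduct.map_tmul, LinearMap.mul'_apply, uMap_apply,
        TensorProduct.rid_tmul, LinearMap.id_coe, id_eq, AlgHom.toLinearMap_apply,
        map_smul]
      rw [Algebra.smul_def, mul_comm]
    | add s1 s2 h1 h2 => simp only [map_add, h1, h2]
  rw [conv_apply, key]
  have h := hεr x
  rw [mapA_coe] at h
  simp only [AlgHom.toLinearMap_id] at h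
  rw [h]

theorem conv_assoc (Δ : Bp →ₐ[ZMod p] (Bp ⊗[ZMod p] Bp))
    (hco : ∀ x : Bp,
      (Algebra.TensorProduct.assoc (ZMod p) (ZMod p) (ZMod p) Bp Bp Bp)
        ((Algebra.TensorProduct.map Δ (AlgHom.id (ZMod p) Bp)) (Δ x)) =
      (Algebra.TensorProduct.map (AlgHom.id (ZMod p) Bp) Δ) (Δ x))
    (f g h : Bp →ₗ[ZMod p] Bp) :
    conv Δ (conv Δ f g) h = conv Δ f (conv Δ g h) := by
  apply LinearMap.ext; intro x
  have key1 : ∀ t : Bp ⊗[ZMod p] Bp,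
      LinearMap.mul' (ZMod p) Bp (TensorProduct.map (conv Δ f g) h t) =
      LinearMap.mul' (ZMod p) Bp
        (TensorProduct.map (LinearMap.mul' (ZMod p) Bp) h
          (TensorProduct.map (TensorProduct.map f g) LinearMap.id
            (TensorProduct.map Δ.toLinearMap LinearMap.id t))) := by
    intro t
    induction t using TensorProduct.induction_on with
    | zero => simp
    | tmul a b => simp [conv_apply, LinearMap.mul'_apply]
    | add s1 s2 h1 h2 => simp only [map_add, h1, h2]
  have key2 : ∀ s : Bp ⊗[ZMod p] (Bp ⊗[ZMod p] Bp),
      LinearMap.mul' (ZMod p) Bp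
        (TensorProduct.map (LinearMap.mul' (ZMod p) Bp) h
          (TensorProduct.map (TensorProduct.map f g) LinearMap.id
            ((TensorProduct.assoc (ZMod p) Bp Bp Bp).symm s))) =
      LinearMap.mul' (ZMod p) Bp
        (TensorProduct.map LinearMap.id (LinearMap.mul' (ZMod p) Bp)
          (TensorProduct.map f (TensorProduct.map g h) s)) := by
    intro s
    induction s using TensorProduct.induction_on with
    | zero => simp
    | tmul a u =>
      induction u using TensorProduct.induction_on with
      | zero => simp
      | tmul b c => simp [LinearMap.mul'_apply, mul_assoc]
      | add v w hv hw =>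
        simp only [tmul_add, map_add, hv, hw]
    | add s1 s2 h1 h2 => simp only [map_add, h1, h2]
  have key3 : ∀ t : Bp ⊗[ZMod p] Bp,
      LinearMap.mul' (ZMod p) Bp (TensorProduct.map f (conv Δ g h) t) =
      LinearMap.mul' (ZMod p) Bp
        (TensorProduct.map LinearMap.id (LinearMap.mul' (ZMod p) Bp)
          (TensorProduct.map f (TensorProduct.map g h)
            (TensorProduct.map LinearMap.id Δ.toLinearMap t))) := by
    intro t
    induction t using TensorProduct.induction_on with
    | zero => simp
    | tmul a b => simp [conv_apply, LinearMap.mul'_apply]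
    | add s1 s2 h1 h2 => simp only [map_add, h1, h2]
  have hco' : TensorProduct.map Δ.toLinearMap LinearMap.id (Δ x) =
      (TensorProduct.assoc (ZMod p) Bp Bp Bp).symm
        (TensorProduct.map LinearMap.id Δ.toLinearMap (Δ x)) := by
    have h2 := hco x
    rw [mapA_coe, mapA_coe, assocA_coe] at h2
    simp only [AlgHom.toLinearMap_id] at h2
    rw [LinearEquiv.eq_symm_apply]
    exact h2
  rw [conv_apply, conv_apply, key1, key3, hco', key2]

theorem conv_eq (Δ : Bp →ₐ[ZMod p] (Bp ⊗[ZMod p] Bp)) (ε : Bp →ₐ[ZMod p] ZMod p)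
    (hco : ∀ x : Bp,
      (Algebra.TensorProduct.assoc (ZMod p) (ZMod p) (ZMod p) Bp Bp Bp)
        ((Algebra.TensorProduct.map Δ (AlgHom.id (ZMod p) Bp)) (Δ x)) =
      (Algebra.TensorProduct.map (AlgHom.id (ZMod p) Bp) Δ) (Δ x))
    (hεl : ∀ x : Bp, (TensorProduct.lid (ZMod p) Bp)
      ((Algebra.TensorProduct.map ε (AlgHom.id (ZMod p) Bp)) (Δ x)) = x)
    (hεr : ∀ x : Bp, (TensorProduct.rid (ZMod p) Bp)
      ((Algebra.TensorProduct.map (AlgHom.id (ZMod p) Bp) ε) (Δ x)) = x)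
    (s t : Bp →ₗ[ZMod p] Bp)
    (hs : conv Δ s LinearMap.id = uMap ε)
    (ht : conv Δ LinearMap.id t = uMap ε) : s = t := by
  calc s = conv Δ s (uMap ε) := (conv_unit_right Δ ε hεr s).symm
    _ = conv Δ s (conv Δ LinearMap.id t) := by rw [ht]
    _ = conv Δ (conv Δ s LinearMap.id) t := (conv_assoc Δ hco s LinearMap.id t).symm
    _ = conv Δ (uMap ε) t := by rw [hs]
    _ = t := conv_unit_left Δ ε hεl t


-- ===== generator algebra maps and antipode =====

/-- The Milnor coproduct as an algebra map. -/
noncomputable def deltaE (p : ℕ) [Fact p.Prime] :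
    MvPolynomial ℕ (ZMod p) →ₐ[ZMod p]
      (MvPolynomial ℕ (ZMod p) ⊗[ZMod p] MvPolynomial ℕ (ZMod p)) :=
  aeval (fun n => milnorCoprodVal p (n + 1))

/-- The counit as an algebra map. -/
noncomputable def epsE (p : ℕ) : MvPolynomial ℕ (ZMod p) →ₐ[ZMod p] ZMod p :=
  aeval (fun _ => 0)

/-- The left antipode as an algebra map. -/
noncomputable def chiL (p : ℕ) : MvPolynomial ℕ (ZMod p) →ₐ[ZMod p] MvPolynomial ℕ (ZMod p) :=
  aeval (fun n => lc p (n + 1))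

/-- The right antipode as an algebra map. -/
noncomputable def chiR (p : ℕ) : MvPolynomial ℕ (ZMod p) →ₐ[ZMod p] MvPolynomial ℕ (ZMod p) :=
  aeval (fun n => rc p (n + 1))

theorem chiL_xi (m : ℕ) : chiL p (milnorXi p m) = lc p m := by
  cases m with
  | zero => rw [xi_zero, map_one, lc]
  | succ n => rw [xi_succ]; exact aeval_X _ _

theorem chiR_xi (m : ℕ) : chiR p (milnorXi p m) = rc p m := by
  cases m with
  | zero => rw [xi_zero, map_one, rc]
  | succ n => rw [xi_succ]; exact aeval_X _ _

theorem coassoc_all (Δ : Bp →ₐ[ZMod p] (Bp ⊗[ZMod p] Bp))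
    (hΔ : ∀ n : ℕ, 1 ≤ n → Δ (milnorXi p n) = milnorCoprodVal p n) :
    ∀ x : Bp,
      (Algebra.TensorProduct.assoc (ZMod p) (ZMod p) (ZMod p) Bp Bp Bp)
        ((Algebra.TensorProduct.map Δ (AlgHom.id (ZMod p) Bp)) (Δ x)) =
      (Algebra.TensorProduct.map (AlgHom.id (ZMod p) Bp) Δ) (Δ x) := by
  have hΔ' := delta_xi Δ hΔ
  have h : (Algebra.TensorProduct.assoc (ZMod p) (ZMod p) (ZMod p) Bp Bp Bp).toAlgHom.comp
      ((Algebra.TensorProduct.map Δ (AlgHom.id (ZMod p) Bp)).comp Δ) =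
      (Algebra.TensorProduct.map (AlgHom.id (ZMod p) Bp) Δ).comp Δ := by
    apply MvPolynomial.algHom_ext
    intro n
    simp only [AlgHom.comp_apply, AlgEquiv.toAlgHom_eq_coe, AlgEquiv.coe_toAlgHom, AlgHom.coe_coe]
    rw [← xi_succ (p := p) n, hΔ', coassoc_cv Δ hΔ' (n + 1)]
  intro x
  have := AlgHom.congr_fun h x
  simpa only [AlgHom.comp_apply, AlgEquiv.toAlgHom_eq_coe, AlgEquiv.coe_toAlgHom, AlgHom.coe_coe] using this

theorem counit_all_left (Δ : Bp →ₐ[ZMod p] (Bp ⊗[ZMod p] Bp))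
    (hΔ : ∀ n : ℕ, 1 ≤ n → Δ (milnorXi p n) = milnorCoprodVal p n)
    (ε : Bp →ₐ[ZMod p] ZMod p)
    (hε : ∀ n : ℕ, 1 ≤ n → ε (milnorXi p n) = 0) :
    ∀ x : Bp, (TensorProduct.lid (ZMod p) Bp)
      ((Algebra.TensorProduct.map ε (AlgHom.id (ZMod p) Bp)) (Δ x)) = x := by
  have hΔ' := delta_xi Δ hΔ
  have hε' := eps_xi ε hε
  have h : (Algebra.TensorProduct.lid (ZMod p) Bp).toAlgHom.comp
      ((Algebra.TensorProduct.map ε (AlgHom.id (ZMod p) Bp)).comp Δ) =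
      AlgHom.id (ZMod p) Bp := by
    apply MvPolynomial.algHom_ext
    intro n
    simp only [AlgHom.comp_apply, AlgEquiv.toAlgHom_eq_coe, AlgEquiv.coe_toAlgHom, AlgHom.coe_coe,
      AlgHom.coe_id, id_eq]
    rw [← xi_succ (p := p) n, hΔ', counit_cv_left ε hε' (n + 1)]
  intro x
  have h2 := AlgHom.congr_fun h x
  simp only [AlgHom.comp_apply, AlgEquiv.toAlgHom_eq_coe, AlgEquiv.coe_toAlgHom, AlgHom.coe_coe,
    AlgHom.coe_id, id_eq] at h2
  rw [← lidA_coe]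
  exact h2

theorem counit_all_right (Δ : Bp →ₐ[ZMod p] (Bp ⊗[ZMod p] Bp))
    (hΔ : ∀ n : ℕ, 1 ≤ n → Δ (milnorXi p n) = milnorCoprodVal p n)
    (ε : Bp →ₐ[ZMod p] ZMod p)
    (hε : ∀ n : ℕ, 1 ≤ n → ε (milnorXi p n) = 0) :
    ∀ x : Bp, (TensorProduct.rid (ZMod p) Bp)
      ((Algebra.TensorProduct.map (AlgHom.id (ZMod p) Bp) ε) (Δ x)) = x := by
  have hΔ' := delta_xi Δ hΔ
  have hε' := eps_xi ε hε
  have h : (Algebra.TensorProduct.rid (ZMod p) (ZMod p) Bp).toAlgHom.comp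
      ((Algebra.TensorProduct.map (AlgHom.id (ZMod p) Bp) ε).comp Δ) =
      AlgHom.id (ZMod p) Bp := by
    apply MvPolynomial.algHom_ext
    intro n
    simp only [AlgHom.comp_apply, AlgEquiv.toAlgHom_eq_coe, AlgEquiv.coe_toAlgHom, AlgHom.coe_coe,
      AlgHom.coe_id, id_eq]
    rw [← xi_succ (p := p) n, hΔ', counit_cv_right ε hε' (n + 1)]
  intro x
  have h2 := AlgHom.congr_fun h x
  simp only [AlgHom.comp_apply, AlgEquiv.toAlgHom_eq_coe, AlgEquiv.coe_toAlgHom, AlgHom.coe_coe,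
    AlgHom.coe_id, id_eq] at h2
  rw [← ridA_coe]
  exact h2

theorem left_antipode_algHom (Δ : Bp →ₐ[ZMod p] (Bp ⊗[ZMod p] Bp))
    (hΔ : ∀ m : ℕ, Δ (milnorXi p m) = milnorCoprodVal p m)
    (ε : Bp →ₐ[ZMod p] ZMod p)
    (hε : ∀ m : ℕ, ε (milnorXi p m) = if m = 0 then 1 else 0) :
    (Algebra.TensorProduct.lmul' (ZMod p) (S := Bp)).comp
      ((Algebra.TensorProduct.map (chiL p) (AlgHom.id (ZMod p) Bp)).comp Δ) =
    (Algebra.ofId (ZMod p) Bp).comp ε := by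
  apply MvPolynomial.algHom_ext
  intro n
  simp only [AlgHom.comp_apply]
  rw [← xi_succ (p := p) n, hΔ, hε, if_neg (Nat.succ_ne_zero n), map_zero]
  rw [milnorCoprodVal, map_sum, map_sum]
  calc
    ∑ k ∈ range (n + 1 + 1),
        (Algebra.TensorProduct.lmul' (ZMod p) (S := Bp))
          ((Algebra.TensorProduct.map (chiL p) (AlgHom.id (ZMod p) Bp))
            (((milnorXi p (n + 1 - k)) ^ (p ^ k)) ⊗ₜ[ZMod p] milnorXi p k))
      = ∑ k ∈ range (n + 1 + 1), (lc p (n + 1 - k)) ^ (p ^ k) * milnorXi p k := by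
        refine Finset.sum_congr rfl fun k _ => ?_
        rw [Algebra.TensorProduct.map_tmul, map_pow, chiL_xi, AlgHom.coe_id, id_eq,
          Algebra.TensorProduct.lmul'_apply_tmul]
    _ = 0 := lc_sum (n + 1) (Nat.succ_le_succ (Nat.zero_le n))

theorem right_antipode_algHom (Δ : Bp →ₐ[ZMod p] (Bp ⊗[ZMod p] Bp))
    (hΔ : ∀ m : ℕ, Δ (milnorXi p m) = milnorCoprodVal p m)
    (ε : Bp →ₐ[ZMod p] ZMod p)
    (hε : ∀ m : ℕ, ε (milnorXi p m) = if m = 0 then 1 else 0) :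
    (Algebra.TensorProduct.lmul' (ZMod p) (S := Bp)).comp
      ((Algebra.TensorProduct.map (AlgHom.id (ZMod p) Bp) (chiR p)).comp Δ) =
    (Algebra.ofId (ZMod p) Bp).comp ε := by
  apply MvPolynomial.algHom_ext
  intro n
  simp only [AlgHom.comp_apply]
  rw [← xi_succ (p := p) n, hΔ, hε, if_neg (Nat.succ_ne_zero n), map_zero]
  rw [milnorCoprodVal, map_sum, map_sum]
  calc
    ∑ k ∈ range (n + 1 + 1),
        (Algebra.TensorProduct.lmul' (ZMod p) (S := Bp))
          ((Algebra.TensorProduct.map (AlgHom.id (ZMod p) Bp) (chiR p))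
            (((milnorXi p (n + 1 - k)) ^ (p ^ k)) ⊗ₜ[ZMod p] milnorXi p k))
      = ∑ k ∈ range (n + 1 + 1), (milnorXi p (n + 1 - k)) ^ (p ^ k) * rc p k := by
        refine Finset.sum_congr rfl fun k _ => ?_
        rw [Algebra.TensorProduct.map_tmul, chiR_xi, AlgHom.coe_id, id_eq,
          Algebra.TensorProduct.lmul'_apply_tmul]
    _ = 0 := rc_sum (n + 1) (Nat.succ_le_succ (Nat.zero_le n))

theorem mul'_eq_lmul' (t : Bp ⊗[ZMod p] Bp) :
    LinearMap.mul' (ZMod p) Bp t = (Algebra.TensorProduct.lmul' (ZMod p) (S := Bp)) t := by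
  rw [← Algebra.TensorProduct.lmul'_toLinearMap]
  rfl

theorem conv_of_left (Δ : Bp →ₐ[ZMod p] (Bp ⊗[ZMod p] Bp))
    (ε : Bp →ₐ[ZMod p] ZMod p)
    (χ : Bp →ₐ[ZMod p] Bp)
    (h : (Algebra.TensorProduct.lmul' (ZMod p) (S := Bp)).comp
      ((Algebra.TensorProduct.map χ (AlgHom.id (ZMod p) Bp)).comp Δ) =
      (Algebra.ofId (ZMod p) Bp).comp ε) :
    conv Δ χ.toLinearMap LinearMap.id = uMap ε := by
  apply LinearMap.ext; intro x
  have h2 := AlgHom.congr_fun h x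
  simp only [AlgHom.comp_apply] at h2
  rw [conv_apply, uMap_apply]
  rw [show TensorProduct.map χ.toLinearMap LinearMap.id (Δ x) =
      Algebra.TensorProduct.map χ (AlgHom.id (ZMod p) Bp) (Δ x) by
    rw [mapA_coe, AlgHom.toLinearMap_id]]
  rw [mul'_eq_lmul', h2]
  rfl

theorem conv_of_right (Δ : Bp →ₐ[ZMod p] (Bp ⊗[ZMod p] Bp))
    (ε : Bp →ₐ[ZMod p] ZMod p)
    (χ : Bp →ₐ[ZMod p] Bp)
    (h : (Algebra.TensorProduct.lmul' (ZMod p) (S := Bp)).comp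
      ((Algebra.TensorProduct.map (AlgHom.id (ZMod p) Bp) χ).comp Δ) =
      (Algebra.ofId (ZMod p) Bp).comp ε) :
    conv Δ LinearMap.id χ.toLinearMap = uMap ε := by
  apply LinearMap.ext; intro x
  have h2 := AlgHom.congr_fun h x
  simp only [AlgHom.comp_apply] at h2
  rw [conv_apply, uMap_apply]
  rw [show TensorProduct.map LinearMap.id χ.toLinearMap (Δ x) =
      Algebra.TensorProduct.map (AlgHom.id (ZMod p) Bp) χ (Δ x) by
    rw [mapA_coe, AlgHom.toLinearMap_id]]
  rw [mul'_eq_lmul', h2]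
  rfl


end MilnorAux

/-- Let `p` be a prime and `B = F_p[ξ_1, ξ_2, …]` (with `ξ_0 = 1`).  Then:
(1) there is a unique `F_p`-algebra homomorphism `Δ : B → B ⊗ B` with
`Δ(ξ_n) = Σ_{k=0}^{n} ξ_{n−k}^{p^k} ⊗ ξ_k` for all `n ≥ 1`, and a unique `F_p`-algebra
homomorphism `ε : B → F_p` with `ε(ξ_n) = 0` for `n ≥ 1`;
(2) `Δ` is coassociative and counital for `ε`;
(3) the bialgebra `(B, Δ, ε)` admits a unique antipode `χ : B → B`, i.e. an `F_p`-linear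
map with `m ∘ (χ ⊗ id) ∘ Δ = η ∘ ε = m ∘ (id ⊗ χ) ∘ Δ`; so `B` is a commutative Hopf
algebra over `F_p`. -/
theorem stmt_0 (p : ℕ) [Fact p.Prime] :
    (∃! Δ : MvPolynomial ℕ (ZMod p) →ₐ[ZMod p]
        (MvPolynomial ℕ (ZMod p) ⊗[ZMod p] MvPolynomial ℕ (ZMod p)),
      ∀ n : ℕ, 1 ≤ n → Δ (milnorXi p n) = milnorCoprodVal p n) ∧
    (∃! ε : MvPolynomial ℕ (ZMod p) →ₐ[ZMod p] ZMod p,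
      ∀ n : ℕ, 1 ≤ n → ε (milnorXi p n) = 0) ∧
    (∀ (Δ : MvPolynomial ℕ (ZMod p) →ₐ[ZMod p]
          (MvPolynomial ℕ (ZMod p) ⊗[ZMod p] MvPolynomial ℕ (ZMod p)))
        (ε : MvPolynomial ℕ (ZMod p) →ₐ[ZMod p] ZMod p),
      (∀ n : ℕ, 1 ≤ n → Δ (milnorXi p n) = milnorCoprodVal p n) →
      (∀ n : ℕ, 1 ≤ n → ε (milnorXi p n) = 0) →
      -- coassociativity
      (∀ x : MvPolynomial ℕ (ZMod p),
        (Algebra.TensorProduct.assoc (ZMod p) (ZMod p) (ZMod p) (MvPolynomial ℕ (ZMod p))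
            (MvPolynomial ℕ (ZMod p)) (MvPolynomial ℕ (ZMod p)))
          ((Algebra.TensorProduct.map Δ (AlgHom.id (ZMod p) (MvPolynomial ℕ (ZMod p))))
            (Δ x)) =
        (Algebra.TensorProduct.map (AlgHom.id (ZMod p) (MvPolynomial ℕ (ZMod p))) Δ)
          (Δ x)) ∧
      -- counit laws
      (∀ x : MvPolynomial ℕ (ZMod p),
        (TensorProduct.lid (ZMod p) (MvPolynomial ℕ (ZMod p)))
          ((Algebra.TensorProduct.map ε (AlgHom.id (ZMod p) (MvPolynomial ℕ (ZMod p))))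
            (Δ x)) = x) ∧
      (∀ x : MvPolynomial ℕ (ZMod p),
        (TensorProduct.rid (ZMod p) (MvPolynomial ℕ (ZMod p)))
          ((Algebra.TensorProduct.map (AlgHom.id (ZMod p) (MvPolynomial ℕ (ZMod p))) ε)
            (Δ x)) = x) ∧
      -- existence and uniqueness of the antipode
      (∃! χ : MvPolynomial ℕ (ZMod p) →ₗ[ZMod p] MvPolynomial ℕ (ZMod p),
        ∀ x : MvPolynomial ℕ (ZMod p),
          (LinearMap.mul' (ZMod p) (MvPolynomial ℕ (ZMod p)))
              ((TensorProduct.map χ LinearMap.id) (Δ x)) =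
            algebraMap (ZMod p) (MvPolynomial ℕ (ZMod p)) (ε x) ∧
          (LinearMap.mul' (ZMod p) (MvPolynomial ℕ (ZMod p)))
              ((TensorProduct.map LinearMap.id χ) (Δ x)) =
            algebraMap (ZMod p) (MvPolynomial ℕ (ZMod p)) (ε x))) := by
  classical
  have hdE : ∀ n : ℕ, 1 ≤ n → MilnorAux.deltaE p (milnorXi p n) = milnorCoprodVal p n := by
    intro n hn
    obtain ⟨m, rfl⟩ : ∃ m, n = m + 1 := ⟨n - 1, by omega⟩
    rw [MilnorAux.xi_succ]; exact MvPolynomial.aeval_X _ _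
  have heE : ∀ n : ℕ, 1 ≤ n → MilnorAux.epsE p (milnorXi p n) = 0 := by
    intro n hn
    obtain ⟨m, rfl⟩ : ∃ m, n = m + 1 := ⟨n - 1, by omega⟩
    rw [MilnorAux.xi_succ]; exact MvPolynomial.aeval_X _ _
  refine ⟨⟨MilnorAux.deltaE p, hdE, ?_⟩, ⟨MilnorAux.epsE p, heE, ?_⟩, ?_⟩
  · intro Δ' h'
    apply MvPolynomial.algHom_ext; intro n
    rw [← MilnorAux.xi_succ (p := p) n, h' _ (Nat.succ_le_succ (Nat.zero_le n)),
      hdE _ (Nat.succ_le_succ (Nat.zero_le n))]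
  · intro ε' h'
    apply MvPolynomial.algHom_ext; intro n
    rw [← MilnorAux.xi_succ (p := p) n, h' _ (Nat.succ_le_succ (Nat.zero_le n)),
      heE _ (Nat.succ_le_succ (Nat.zero_le n))]
  · intro Δ ε hΔ hε
    have hΔ' := MilnorAux.delta_xi Δ hΔ
    have hε' := MilnorAux.eps_xi ε hε
    have hco := MilnorAux.coassoc_all Δ hΔ
    have hεl := MilnorAux.counit_all_left Δ hΔ ε hε
    have hεr := MilnorAux.counit_all_right Δ hΔ ε hε
    refine ⟨hco, hεl, hεr, ?_⟩
    have hLa : MilnorAux.conv Δ (MilnorAux.chiL p).toLinearMap LinearMap.id =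
        MilnorAux.uMap ε :=
      MilnorAux.conv_of_left Δ ε _ (MilnorAux.left_antipode_algHom Δ hΔ' ε hε')
    have hRa : MilnorAux.conv Δ LinearMap.id (MilnorAux.chiR p).toLinearMap =
        MilnorAux.uMap ε :=
      MilnorAux.conv_of_right Δ ε _ (MilnorAux.right_antipode_algHom Δ hΔ' ε hε')
    have hLR : (MilnorAux.chiL p).toLinearMap = (MilnorAux.chiR p).toLinearMap :=
      MilnorAux.conv_eq Δ ε hco hεl hεr _ _ hLa hRa
    have hLa2 : MilnorAux.conv Δ LinearMap.id (MilnorAux.chiL p).toLinearMap =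
        MilnorAux.uMap ε := by rw [hLR]; exact hRa
    refine ⟨(MilnorAux.chiL p).toLinearMap,
      fun x => ⟨LinearMap.congr_fun hLa x, LinearMap.congr_fun hLa2 x⟩, ?_⟩
    intro χ hχ
    exact MilnorAux.conv_eq Δ ε hco hεl hεr χ (MilnorAux.chiL p).toLinearMap
      (LinearMap.ext fun x => (hχ x).1) hLa2
end

section
/- Suppose in addition that p is odd. Then for every integer t ≥ 1, the degree-2(p^t − 1) homogeneous component of ξ̄^{−1} (the multiplicative inverse of ξ̄ in B̂) equals ξ_t. -/
open TensorProduct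

/-- The element `ξ̄` of the completion `B̂ = ∏_m B_{2m}` (modelled as a power series with
coefficients in `B`, the degree-`2m` component being the coefficient of `T^m`): its
degree-`2(p^n − 1)` component is `χ(ξ_n)` and all other components vanish. -/
noncomputable def xiBar (p : ℕ)
    (χ : MvPolynomial ℕ (ZMod p) →ₗ[ZMod p] MvPolynomial ℕ (ZMod p)) :
    PowerSeries (MvPolynomial ℕ (ZMod p)) :=
  PowerSeries.mk fun m =>
    ∑ n ∈ Finset.range (m + 1), if p ^ n - 1 = m then χ (milnorXi p n) else 0

/-! ### Auxiliary machinery -/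

section AuxMachinery

variable {p : ℕ} [Fact p.Prime]

lemma aux_hp1 : 1 < p := (Fact.out : p.Prime).one_lt

lemma aux_char_BB : CharP ((MvPolynomial ℕ (ZMod p)) ⊗[ZMod p] (MvPolynomial ℕ (ZMod p))) p := by
  have h : Function.Injective (Algebra.TensorProduct.includeLeft :
      MvPolynomial ℕ (ZMod p) →ₐ[ZMod p]
        (MvPolynomial ℕ (ZMod p)) ⊗[ZMod p] (MvPolynomial ℕ (ZMod p))).toRingHom := by
    intro x y hxy
    have := congrArg (Algebra.TensorProduct.lmul' (S := MvPolynomial ℕ (ZMod p)) (ZMod p)) hxy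
    simpa using this
  exact charP_of_injective_ringHom h p

lemma aux_expChar_BB :
    ExpChar ((MvPolynomial ℕ (ZMod p)) ⊗[ZMod p] (MvPolynomial ℕ (ZMod p))) p := by
  haveI := aux_char_BB (p := p)
  exact ExpChar.prime (Fact.out)

variable (Δ : MvPolynomial ℕ (ZMod p) →ₐ[ZMod p]
      (MvPolynomial ℕ (ZMod p) ⊗[ZMod p] MvPolynomial ℕ (ZMod p)))
    (ε : MvPolynomial ℕ (ZMod p) →ₐ[ZMod p] ZMod p)
    (χ : MvPolynomial ℕ (ZMod p) →ₗ[ZMod p] MvPolynomial ℕ (ZMod p))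

/-- `χ(1) = 1`. -/
lemma aux_chi_one
    (hχ : ∀ x : MvPolynomial ℕ (ZMod p),
      (LinearMap.mul' (ZMod p) (MvPolynomial ℕ (ZMod p)))
          ((TensorProduct.map χ LinearMap.id) (Δ x)) =
        algebraMap (ZMod p) (MvPolynomial ℕ (ZMod p)) (ε x) ∧
      (LinearMap.mul' (ZMod p) (MvPolynomial ℕ (ZMod p)))
          ((TensorProduct.map LinearMap.id χ) (Δ x)) =
        algebraMap (ZMod p) (MvPolynomial ℕ (ZMod p)) (ε x)) :
    χ 1 = 1 := by
  have h := (hχ 1).2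
  rw [map_one, Algebra.TensorProduct.one_def, map_one] at h
  rw [TensorProduct.map_tmul, LinearMap.mul'_apply, LinearMap.id_apply] at h
  simpa using h

/-- Frobenius twist of the (right) antipode relation. -/
lemma aux_rel2
    (hΔ : ∀ n : ℕ, 1 ≤ n → Δ (milnorXi p n) = milnorCoprodVal p n)
    (hε : ∀ n : ℕ, 1 ≤ n → ε (milnorXi p n) = 0)
    (hχ : ∀ x : MvPolynomial ℕ (ZMod p),
      (LinearMap.mul' (ZMod p) (MvPolynomial ℕ (ZMod p)))
          ((TensorProduct.map χ LinearMap.id) (Δ x)) =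
        algebraMap (ZMod p) (MvPolynomial ℕ (ZMod p)) (ε x) ∧
      (LinearMap.mul' (ZMod p) (MvPolynomial ℕ (ZMod p)))
          ((TensorProduct.map LinearMap.id χ) (Δ x)) =
        algebraMap (ZMod p) (MvPolynomial ℕ (ZMod p)) (ε x))
    (j n : ℕ) (hn : 1 ≤ n) :
    ∑ k ∈ Finset.range (n + 1),
      (milnorXi p (n - k)) ^ (p ^ k * p ^ j) * χ ((milnorXi p k) ^ (p ^ j)) = 0 := by
  haveI := aux_expChar_BB (p := p)
  have h := (hχ ((milnorXi p n) ^ (p ^ j))).2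
  rw [map_pow, hΔ n hn, milnorCoprodVal, sum_pow_char_pow] at h
  simp only [Algebra.TensorProduct.tmul_pow, ← pow_mul] at h
  rw [map_sum, map_sum] at h
  simp only [TensorProduct.map_tmul, LinearMap.mul'_apply, LinearMap.id_apply] at h
  rw [map_pow, hε n hn, zero_pow (pow_ne_zero _ (Nat.Prime.ne_zero Fact.out)), map_zero] at h
  exact h

/-- The (left) antipode relation. -/
lemma aux_rel1
    (hΔ : ∀ n : ℕ, 1 ≤ n → Δ (milnorXi p n) = milnorCoprodVal p n)
    (hε : ∀ n : ℕ, 1 ≤ n → ε (milnorXi p n) = 0)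
    (hχ : ∀ x : MvPolynomial ℕ (ZMod p),
      (LinearMap.mul' (ZMod p) (MvPolynomial ℕ (ZMod p)))
          ((TensorProduct.map χ LinearMap.id) (Δ x)) =
        algebraMap (ZMod p) (MvPolynomial ℕ (ZMod p)) (ε x) ∧
      (LinearMap.mul' (ZMod p) (MvPolynomial ℕ (ZMod p)))
          ((TensorProduct.map LinearMap.id χ) (Δ x)) =
        algebraMap (ZMod p) (MvPolynomial ℕ (ZMod p)) (ε x))
    (N : ℕ) (hN : 1 ≤ N) :
    ∑ k ∈ Finset.range (N + 1),
      χ ((milnorXi p (N - k)) ^ (p ^ k)) * milnorXi p k = 0 := by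
  have h := (hχ (milnorXi p N)).1
  rw [hΔ N hN, milnorCoprodVal, map_sum, map_sum] at h
  simp only [TensorProduct.map_tmul, LinearMap.mul'_apply, LinearMap.id_apply] at h
  rw [hε N hN, map_zero] at h
  exact h

/-- `χ` commutes with Frobenius powers on the generators. -/
lemma aux_chi_pow
    (hone : χ 1 = 1)
    (hrel : ∀ (j n : ℕ), 1 ≤ n → ∑ k ∈ Finset.range (n + 1),
      (milnorXi p (n - k)) ^ (p ^ k * p ^ j) * χ ((milnorXi p k) ^ (p ^ j)) = 0)
    (n j : ℕ) :
    χ ((milnorXi p n) ^ (p ^ j)) = (χ (milnorXi p n)) ^ (p ^ j) := by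
  induction n using Nat.strong_induction_on with
  | _ n IH =>
    rcases Nat.eq_zero_or_pos n with rfl | hn
    · rw [show milnorXi p 0 = 1 from rfl, one_pow, hone, one_pow]
    · have S1 := hrel j n hn
      have S2 : ∑ k ∈ Finset.range (n + 1),
          (milnorXi p (n - k)) ^ (p ^ k * p ^ j) * (χ ((milnorXi p k))) ^ (p ^ j) = 0 := by
        have h0 := hrel 0 n hn
        simp only [pow_zero, mul_one, pow_one] at h0
        have := congrArg (· ^ (p ^ j)) h0
        simpa only [sum_pow_char_pow, mul_pow, ← pow_mul, zero_pow
          (pow_ne_zero _ (Nat.Prime.ne_zero Fact.out))] using this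
      have S3 : ∑ k ∈ Finset.range (n + 1),
          (milnorXi p (n - k)) ^ (p ^ k * p ^ j) *
            (χ ((milnorXi p k) ^ (p ^ j)) - (χ (milnorXi p k)) ^ (p ^ j)) = 0 := by
        simp only [mul_sub, Finset.sum_sub_distrib, S1, S2, sub_zero]
      rw [Finset.sum_range_succ, Finset.sum_eq_zero, zero_add] at S3
      · have hz : milnorXi p (n - n) = 1 := by simp [milnorXi]
        rw [hz, one_pow, one_mul, sub_eq_zero] at S3
        exact S3
      · intro k hk
        rw [IH k (Finset.mem_range.mp hk), sub_self, mul_zero]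

/-- Frobenius acting on coefficients of a power series over a char-`p` ring. -/
lemma aux_coeff_pow_char {R : Type*} [CommRing R] [CharP R p]
    (f : PowerSeries R) (M : ℕ) :
    PowerSeries.coeff (R := R) M (f ^ p) =
      if p ∣ M then (PowerSeries.coeff (R := R) (M / p) f) ^ p else 0 := by
  have hp : 0 < p := (Fact.out : p.Prime).pos
  set g := PowerSeries.trunc (M + 1) f with hg
  have hdvd : (PowerSeries.X : PowerSeries R) ^ (M + 1) ∣ f - ↑g :=
    PowerSeries.X_pow_dvd_iff.mpr (fun m hm => by
      rw [map_sub, Polynomial.coeff_coe, hg, PowerSeries.coeff_trunc, if_pos hm, sub_self])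
  have h2 : (PowerSeries.X : PowerSeries R) ^ (M + 1) ∣ f ^ p - (↑g : PowerSeries R) ^ p :=
    hdvd.trans (sub_dvd_pow_sub_pow f (↑g) p)
  have h3 : PowerSeries.coeff (R := R) M (f ^ p) = PowerSeries.coeff (R := R) M ((↑g : PowerSeries R) ^ p) := by
    have := PowerSeries.X_pow_dvd_iff.mp h2 M (Nat.lt_succ_self M)
    rw [map_sub, sub_eq_zero] at this
    exact this
  rw [h3, ← Polynomial.coe_pow, Polynomial.coeff_coe,
    ← Polynomial.map_frobenius_expand (p := p) g, Polynomial.coeff_map, Polynomial.coeff_expand hp]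
  split_ifs with h
  · rw [frobenius_def, hg, PowerSeries.coeff_trunc,
      if_pos (Nat.lt_succ_of_le (Nat.div_le_self M p))]
  · rw [map_zero]

lemma aux_coeff_pow_char_pow {R : Type*} [CommRing R] [CharP R p]
    (f : PowerSeries R) (k M : ℕ) :
    PowerSeries.coeff (R := R) M (f ^ p ^ k) =
      if p ^ k ∣ M then (PowerSeries.coeff (R := R) (M / p ^ k) f) ^ p ^ k else 0 := by
  induction k generalizing M with
  | zero => simp
  | succ k IH =>
    have hstep : f ^ p ^ (k + 1) = (f ^ p ^ k) ^ p := by rw [← pow_mul, pow_succ]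
    rw [hstep, aux_coeff_pow_char _ M]
    by_cases h1 : p ∣ M
    · rw [if_pos h1, IH, Nat.div_div_eq_div_mul, ← pow_succ']
      by_cases h2 : p ^ (k + 1) ∣ M
      · rw [if_pos ((Nat.dvd_div_iff_mul_dvd h1).mpr (by rwa [← pow_succ'])),
          if_pos h2, ← pow_mul, ← pow_succ]
      · rw [if_neg (fun hc => h2 (by
            rw [pow_succ']; exact (Nat.dvd_div_iff_mul_dvd h1).mp hc)),
          if_neg h2, zero_pow (Nat.Prime.ne_zero Fact.out)]
    · rw [if_neg h1, if_neg fun hc => h1 ((dvd_pow_self p k.succ_ne_zero).trans hc)]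

/-- The coefficient of `ξ̄` in degree `p^n - 1` is `χ(ξ_n)`. -/
lemma aux_xiBar_coeff_pow (n : ℕ) :
    PowerSeries.coeff (p ^ n - 1) (xiBar p χ) = χ (milnorXi p n) := by
  have hp : 1 < p := aux_hp1
  rw [xiBar, PowerSeries.coeff_mk]
  rw [Finset.sum_eq_single n]
  · rw [if_pos rfl]
  · intro b _ hb
    rw [if_neg]
    intro hcontra
    apply hb
    have h1 : 1 ≤ p ^ b := Nat.one_le_pow _ _ (by omega)
    have h2 : 1 ≤ p ^ n := Nat.one_le_pow _ _ (by omega)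
    have he : p ^ b = p ^ n := by omega
    exact Nat.pow_right_injective hp he
  · intro hn
    exfalso
    exact hn (Finset.mem_range.mpr (by
      have := Nat.lt_pow_self (n := n) hp
      omega))

lemma aux_xiBar_coeff_zero' (j : ℕ) (h : ∀ a : ℕ, p ^ a - 1 ≠ j) :
    PowerSeries.coeff j (xiBar p χ) = 0 := by
  rw [xiBar, PowerSeries.coeff_mk]
  exact Finset.sum_eq_zero fun n _ => if_neg (h n)

lemma aux_xiBar_const : PowerSeries.constantCoeff (xiBar p χ) = χ 1 := by
  have h := aux_xiBar_coeff_pow χ 0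
  rw [pow_zero] at h
  rw [← PowerSeries.coeff_zero_eq_constantCoeff_apply]
  simpa [milnorXi] using h

end AuxMachinery

section AuxMachinery2

variable {p : ℕ} [Fact p.Prime]
variable (χ : MvPolynomial ℕ (ZMod p) →ₗ[ZMod p] MvPolynomial ℕ (ZMod p))

/-- Coefficients (below degree `p^t`) of the series `∑_k ξ_k ξ̄^{p^k} T^{p^k-1}`. -/
lemma aux_key1
    (hone : χ 1 = 1)
    (hpow : ∀ n j : ℕ, χ ((milnorXi p n) ^ (p ^ j)) = (χ (milnorXi p n)) ^ (p ^ j))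
    (hr1 : ∀ N : ℕ, 1 ≤ N → ∑ k ∈ Finset.range (N + 1),
      χ ((milnorXi p (N - k)) ^ (p ^ k)) * milnorXi p k = 0)
    (t i : ℕ) (hi : i ≤ p ^ t - 1) :
    PowerSeries.coeff i (∑ k ∈ Finset.range (t + 1),
        PowerSeries.C (milnorXi p k) * (xiBar p χ) ^ (p ^ k) *
          PowerSeries.X ^ (p ^ k - 1)) =
      if i = 0 then 1 else 0 := by
  have hp : 1 < p := aux_hp1
  rw [map_sum]
  by_cases hcase : ∃ N : ℕ, i + 1 = p ^ N
  · obtain ⟨N, hN⟩ := hcase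
    have h1t : 1 ≤ p ^ t := Nat.one_le_pow _ _ (by omega)
    have hNt : N ≤ t := by
      refine (Nat.pow_le_pow_iff_right hp).mp ?_
      omega
    have hsub : Finset.range (N + 1) ⊆ Finset.range (t + 1) :=
      Finset.range_subset_range.mpr (by omega)
    have hzero : ∀ k ∈ Finset.range (t + 1), k ∉ Finset.range (N + 1) →
        PowerSeries.coeff i (PowerSeries.C (milnorXi p k) * (xiBar p χ) ^ (p ^ k) *
          PowerSeries.X ^ (p ^ k - 1)) = 0 := by
      intro k _ hk
      have hkN : N < k := by
        by_contra hc
        exact hk (Finset.mem_range.mpr (by omega))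
      have hlt : p ^ N < p ^ k := Nat.pow_lt_pow_right hp (by omega)
      have h1N : 1 ≤ p ^ N := Nat.one_le_pow _ _ (by omega)
      rw [PowerSeries.coeff_mul_X_pow', if_neg (by omega)]
    have hval : ∀ k ∈ Finset.range (N + 1),
        PowerSeries.coeff i (PowerSeries.C (milnorXi p k) * (xiBar p χ) ^ (p ^ k) *
          PowerSeries.X ^ (p ^ k - 1)) =
        χ ((milnorXi p (N - k)) ^ (p ^ k)) * milnorXi p k := by
      intro k hkmem
      have hkN : k ≤ N := by
        have := Finset.mem_range.mp hkmem; omega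
      have h1k : 1 ≤ p ^ k := Nat.one_le_pow _ _ (by omega)
      have hle : p ^ k ≤ p ^ N := Nat.pow_le_pow_right (by omega) hkN
      have h1nk : 1 ≤ p ^ (N - k) := Nat.one_le_pow _ _ (by omega)
      have hmulpow : p ^ k * p ^ (N - k) = p ^ N := by
        rw [← pow_add]; congr 1; omega
      rw [PowerSeries.coeff_mul_X_pow', if_pos (by omega : p ^ k - 1 ≤ i),
        PowerSeries.coeff_C_mul, aux_coeff_pow_char_pow]
      have hms : p ^ k * (p ^ (N - k) - 1) = p ^ k * p ^ (N - k) - p ^ k := by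
        rw [Nat.mul_sub, mul_one]
      have e3 : p ^ k ≤ p ^ k * p ^ (N - k) := Nat.le_mul_of_pos_right _ (by omega)
      have harith : i - (p ^ k - 1) = p ^ k * (p ^ (N - k) - 1) := by omega
      rw [harith, if_pos (dvd_mul_right _ _),
        Nat.mul_div_cancel_left _ (by omega : 0 < p ^ k),
        aux_xiBar_coeff_pow, ← hpow]
      exact mul_comm _ _
    rw [← Finset.sum_subset hsub hzero, Finset.sum_congr rfl hval]
    rcases Nat.eq_zero_or_pos N with rfl | hN1
    · have hi0 : i = 0 := by simp at hN; omega
      rw [if_pos hi0]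
      simp [milnorXi, hone]
    · have hine : i ≠ 0 := by
        have h2N : p ≤ p ^ N := Nat.le_self_pow (by omega) p
        omega
      rw [if_neg hine, hr1 N hN1]
  · rw [if_neg (fun h0 => hcase ⟨0, by simp [h0]⟩)]
    apply Finset.sum_eq_zero
    intro k _
    rw [PowerSeries.coeff_mul_X_pow']
    split_ifs with h1
    · rw [PowerSeries.coeff_C_mul, aux_coeff_pow_char_pow]
      split_ifs with h2
      · have hz : PowerSeries.coeff ((i - (p ^ k - 1)) / p ^ k) (xiBar p χ) = 0 := by
          apply aux_xiBar_coeff_zero'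
          intro a ha
          apply hcase
          refine ⟨k + a, ?_⟩
          have h1k : 1 ≤ p ^ k := Nat.one_le_pow _ _ (by omega)
          have h1a : 1 ≤ p ^ a := Nat.one_le_pow _ _ (by omega)
          have hq : i - (p ^ k - 1) = p ^ k * (p ^ a - 1) :=
            Nat.eq_mul_of_div_eq_right h2 ha.symm
          have hms : p ^ k * (p ^ a - 1) = p ^ k * p ^ a - p ^ k := by
            rw [Nat.mul_sub, mul_one]
          have e3 : p ^ k ≤ p ^ k * p ^ a := Nat.le_mul_of_pos_right _ (by omega)
          rw [pow_add]
          omega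
        rw [hz, zero_pow (pow_ne_zero _ (Nat.Prime.ne_zero Fact.out)), mul_zero]
      · rw [mul_zero]
    · rfl

lemma aux_sum_map_mul (l : Multiset ℕ) : (l.map (fun x => p * x)).sum = p * l.sum := by
  induction l using Multiset.induction_on with
  | empty => simp
  | cons a s ih => simp [Multiset.map_cons, Multiset.sum_cons, ih, Nat.mul_add]

lemma aux_sum_map_div (l : Multiset ℕ) (h : ∀ x ∈ l, p ∣ x) :
    (l.map (fun x => x / p)).sum = l.sum / p := by
  induction l using Multiset.induction_on with
  | empty => simp
  | cons a s ih =>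
    have ha : p ∣ a := h a (Multiset.mem_cons_self a s)
    have hs : ∀ x ∈ s, p ∣ x := fun x hx => h x (Multiset.mem_cons_of_mem hx)
    rw [Multiset.map_cons, Multiset.sum_cons, Multiset.sum_cons, ih hs,
      Nat.add_div_of_dvd_right ha]

lemma aux_powsum (c : ℕ) (M : ℕ)
    (h : PowerSeries.coeff M ((xiBar p χ) ^ c) ≠ 0) :
    ∃ l : Multiset ℕ, (∀ x ∈ l, ∃ a : ℕ, x = p ^ a) ∧
      Multiset.card l = c ∧ l.sum = M + c := by
  induction c generalizing M with
  | zero =>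
    rw [pow_zero, PowerSeries.coeff_one] at h
    have hM : M = 0 := by
      by_contra hM
      exact h (if_neg hM)
    subst hM
    exact ⟨0, by simp, by simp, by simp⟩
  | succ c IH =>
    rw [pow_succ, PowerSeries.coeff_mul] at h
    obtain ⟨ij, hmem, hne⟩ := Finset.exists_ne_zero_of_sum_ne_zero h
    have hi : PowerSeries.coeff ij.1 ((xiBar p χ) ^ c) ≠ 0 := left_ne_zero_of_mul hne
    have hj : PowerSeries.coeff ij.2 (xiBar p χ) ≠ 0 := right_ne_zero_of_mul hne
    obtain ⟨l, hl1, hl2, hl3⟩ := IH _ hi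
    have hex : ∃ a : ℕ, p ^ a - 1 = ij.2 := by
      by_contra hno
      push_neg at hno
      exact hj (aux_xiBar_coeff_zero' χ _ hno)
    obtain ⟨a, ha⟩ := hex
    have hpge : 1 < p := aux_hp1
    have h1a : 1 ≤ p ^ a := Nat.one_le_pow _ _ (by omega)
    refine ⟨(p ^ a) ::ₘ l, ?_, ?_, ?_⟩
    · intro x hx
      rcases Multiset.mem_cons.mp hx with rfl | hx
      · exact ⟨a, rfl⟩
      · exact hl1 x hx
    · rw [Multiset.card_cons, hl2]
    · rw [Multiset.sum_cons, hl3]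
      have hij := Finset.HasAntidiagonal.mem_antidiagonal.mp hmem
      omega

lemma aux_powsum_dil (j : ℕ) (M : ℕ)
    (h : PowerSeries.coeff M ((xiBar p χ) ^ (p ^ j - 1)) ≠ 0) :
    ∃ l : Multiset ℕ, (∀ x ∈ l, ∃ a : ℕ, x = p ^ a) ∧
      Multiset.card l = (p - 1) * j ∧ l.sum = M + (p ^ j - 1) := by
  have hp : 1 < p := aux_hp1
  induction j generalizing M with
  | zero =>
    have h0 : p ^ 0 - 1 = 0 := by simp
    rw [h0, pow_zero, PowerSeries.coeff_one] at h
    have hM : M = 0 := by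
      by_contra hM
      exact h (if_neg hM)
    subst hM
    exact ⟨0, by simp, by simp, by simp⟩
  | succ j IH =>
    have h1j : 1 ≤ p ^ j := Nat.one_le_pow _ _ (by omega)
    have h1j1 : 1 ≤ p ^ (j + 1) := Nat.one_le_pow _ _ (by omega)
    have hsplit : (xiBar p χ) ^ (p ^ (j + 1) - 1) =
        ((xiBar p χ) ^ (p ^ j - 1)) ^ p * (xiBar p χ) ^ (p - 1) := by
      rw [← pow_mul, ← pow_add]
      congr 1
      have hms : (p ^ j - 1) * p = p ^ j * p - p := by rw [Nat.sub_mul, one_mul]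
      have hpows : p ^ j * p = p ^ (j + 1) := (pow_succ p j).symm
      have hBp : p ≤ p ^ j * p := Nat.le_mul_of_pos_left _ (by omega)
      omega
    rw [hsplit, PowerSeries.coeff_mul] at h
    obtain ⟨ij, hmem, hne⟩ := Finset.exists_ne_zero_of_sum_ne_zero h
    have hi : PowerSeries.coeff ij.1 (((xiBar p χ) ^ (p ^ j - 1)) ^ p) ≠ 0 :=
      left_ne_zero_of_mul hne
    have hr : PowerSeries.coeff ij.2 ((xiBar p χ) ^ (p - 1)) ≠ 0 :=
      right_ne_zero_of_mul hne
    rw [aux_coeff_pow_char] at hi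
    by_cases hdvd : p ∣ ij.1
    · rw [if_pos hdvd] at hi
      have hi' : PowerSeries.coeff (ij.1 / p) ((xiBar p χ) ^ (p ^ j - 1)) ≠ 0 :=
        fun hz => hi (by rw [hz, zero_pow (Nat.Prime.ne_zero Fact.out)])
      obtain ⟨l, hl1, hl2, hl3⟩ := IH _ hi'
      obtain ⟨l', hl1', hl2', hl3'⟩ := aux_powsum χ (p - 1) ij.2 hr
      refine ⟨l.map (fun x => p * x) + l', ?_, ?_, ?_⟩
      · intro x hx
        rcases Multiset.mem_add.mp hx with hx | hx
        · obtain ⟨y, hy, rfl⟩ := Multiset.mem_map.mp hx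
          obtain ⟨a, rfl⟩ := hl1 y hy
          exact ⟨a + 1, by rw [pow_succ']⟩
        · exact hl1' x hx
      · rw [Multiset.card_add, Multiset.card_map, hl2, hl2']
        ring
      · rw [Multiset.sum_add, aux_sum_map_mul, hl3, hl3', Nat.mul_add,
          Nat.mul_div_cancel' hdvd]
        have hij := Finset.HasAntidiagonal.mem_antidiagonal.mp hmem
        have hms : p * (p ^ j - 1) = p ^ (j + 1) - p := by
          rw [Nat.mul_sub, mul_one, ← pow_succ']
        have hple : p ≤ p ^ (j + 1) := Nat.le_self_pow (by omega) p
        omega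
    · rw [if_neg hdvd] at hi
      exact absurd rfl hi

lemma aux_digits_le (N : ℕ) : ∀ (l : Multiset ℕ), (∀ x ∈ l, ∃ a : ℕ, x = p ^ a) →
    l.sum = N → (Nat.digits p N).sum ≤ Multiset.card l := by
  have hp : 1 < p := aux_hp1
  induction N using Nat.strong_induction_on with
  | _ N IH =>
    intro l hlpow hlsum
    rcases Nat.eq_zero_or_pos N with rfl | hN
    · simp
    · classical
      set l₁ := l.filter (fun x => x = 1) with hl₁
      set l₂ := l.filter (fun x => ¬ x = 1) with hl₂
      have hladd : l₁ + l₂ = l := Multiset.filter_add_not _ l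
      have hall1 : ∀ x ∈ l₁, x = 1 := fun x hx => (Multiset.mem_filter.mp hx).2
      set r := Multiset.card l₁ with hr
      have hsum1 : l₁.sum = r := by
        have hrep : l₁ = Multiset.replicate r 1 := Multiset.eq_replicate_card.mpr hall1
        rw [hrep, Multiset.sum_replicate, smul_eq_mul, mul_one]
      have hdvd2 : ∀ x ∈ l₂, p ∣ x := by
        intro x hx
        obtain ⟨hxl, hx1⟩ := Multiset.mem_filter.mp hx
        obtain ⟨a, rfl⟩ := hlpow x hxl
        rcases Nat.eq_zero_or_pos a with rfl | ha
        · simp at hx1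
        · exact dvd_pow_self p (by omega)
      have hs2 : p ∣ l₂.sum := Multiset.dvd_sum hdvd2
      obtain ⟨q, hq⟩ := hs2
      set l' := l₂.map (fun x => x / p) + Multiset.replicate (r / p) 1 with hl'
      have hl'pow : ∀ x ∈ l', ∃ a : ℕ, x = p ^ a := by
        intro x hx
        rcases Multiset.mem_add.mp hx with hx | hx
        · obtain ⟨y, hy, rfl⟩ := Multiset.mem_map.mp hx
          obtain ⟨hyl, hy1⟩ := Multiset.mem_filter.mp hy
          obtain ⟨a, rfl⟩ := hlpow y hyl
          rcases Nat.eq_zero_or_pos a with rfl | ha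
          · simp at hy1
          · have hdv := Nat.pow_div (show 1 ≤ a by omega) (show 0 < p by omega)
            rw [pow_one] at hdv
            exact ⟨a - 1, hdv⟩
        · have hx1 := Multiset.eq_of_mem_replicate hx
          exact ⟨0, by rw [hx1, pow_zero]⟩
      have hNsplit : N = r + p * q := by
        rw [← hlsum, ← hladd, Multiset.sum_add, hsum1, hq]
      have hsum' : l'.sum = N / p := by
        rw [hl', Multiset.sum_add, aux_sum_map_div _ hdvd2, hq,
          Multiset.sum_replicate, smul_eq_mul, mul_one,
          Nat.mul_div_cancel_left q (by omega : 0 < p), hNsplit,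
          Nat.add_mul_div_left r q (by omega : 0 < p)]
        omega
      have hcard' : Multiset.card l' = Multiset.card l₂ + r / p := by
        rw [hl', Multiset.card_add, Multiset.card_map, Multiset.card_replicate]
      have hcard : Multiset.card l = r + Multiset.card l₂ := by
        rw [← hladd, Multiset.card_add]
      have hIH := IH (N / p) (Nat.div_lt_self hN (by omega)) l' hl'pow hsum'
      have hdig : (Nat.digits p N).sum = N % p + (Nat.digits p (N / p)).sum := by
        rw [Nat.digits_def' hp hN, List.sum_cons]
      have hmod : N % p = r % p := by
        rw [hNsplit, Nat.add_mul_mod_self_left]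
      have hkey : r % p + r / p ≤ r :=
        calc r % p + r / p ≤ r % p + p * (r / p) :=
              Nat.add_le_add_left (Nat.le_mul_of_pos_left _ (by omega)) _
          _ = r := Nat.mod_add_div r p
      calc (Nat.digits p N).sum = N % p + (Nat.digits p (N / p)).sum := hdig
        _ ≤ N % p + Multiset.card l' := Nat.add_le_add_left hIH _
        _ = r % p + (Multiset.card l₂ + r / p) := by rw [hmod, hcard']
        _ = (r % p + r / p) + Multiset.card l₂ := by ring
        _ ≤ r + Multiset.card l₂ := Nat.add_le_add_right hkey _
        _ = Multiset.card l := hcard.symm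

lemma aux_digits_pow_sub_one (t : ℕ) :
    (Nat.digits p (p ^ t - 1)).sum = (p - 1) * t := by
  have hp : 1 < p := aux_hp1
  induction t with
  | zero => simp
  | succ t IH =>
    have h1t : 1 ≤ p ^ t := Nat.one_le_pow _ _ (by omega)
    have hms : p * (p ^ t - 1) = p ^ (t + 1) - p := by
      rw [Nat.mul_sub, mul_one, ← pow_succ']
    have hle : p ≤ p ^ (t + 1) := Nat.le_self_pow (by omega) p
    have hsplit : p ^ (t + 1) - 1 = (p - 1) + p * (p ^ t - 1) := by omega
    have hpos : 0 < p ^ (t + 1) - 1 := by omega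
    rw [Nat.digits_def' hp hpos, List.sum_cons]
    have hmod : (p ^ (t + 1) - 1) % p = p - 1 := by
      rw [hsplit, Nat.add_mul_mod_self_left, Nat.mod_eq_of_lt (by omega)]
    have hdiv : (p ^ (t + 1) - 1) / p = p ^ t - 1 := by
      rw [hsplit, Nat.add_mul_div_left _ _ (by omega : 0 < p),
        Nat.div_eq_of_lt (by omega), zero_add]
    rw [hmod, hdiv, IH, Nat.mul_succ]
    exact Nat.add_comm _ _

lemma aux_vanish (t k : ℕ) (hk : k < t) :
    PowerSeries.coeff (p ^ t - p ^ k) ((xiBar p χ) ^ (p ^ k - 1)) = 0 := by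
  have hp : 1 < p := aux_hp1
  by_contra h
  obtain ⟨l, hl1, hl2, hl3⟩ := aux_powsum_dil χ k _ h
  have h1k : 1 ≤ p ^ k := Nat.one_le_pow _ _ (by omega)
  have hlt : p ^ k < p ^ t := Nat.pow_lt_pow_right hp hk
  have hsum : l.sum = p ^ t - 1 := by omega
  have hle := aux_digits_le (p ^ t - 1) l hl1 hsum
  rw [aux_digits_pow_sub_one, hl2] at hle
  have hmul : (p - 1) * k < (p - 1) * t :=
    Nat.mul_lt_mul_of_pos_left hk (by omega : 0 < p - 1)
  omega

end AuxMachinery2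

/-- For an odd prime `p`, the degree-`2(p^t − 1)` homogeneous component of `ξ̄^{−1}`
(the multiplicative inverse of `ξ̄` in `B̂`) equals `ξ_t`, for every `t ≥ 1`.
Here `Δ`, `ε` are the coproduct and counit of `B`, `χ` is its antipode, and `u` is `ξ̄`
regarded as a unit of `B̂`. -/
theorem stmt_2 (p : ℕ) [Fact p.Prime] (hodd : Odd p)
    (Δ : MvPolynomial ℕ (ZMod p) →ₐ[ZMod p]
      (MvPolynomial ℕ (ZMod p) ⊗[ZMod p] MvPolynomial ℕ (ZMod p)))
    (hΔ : ∀ n : ℕ, 1 ≤ n → Δ (milnorXi p n) = milnorCoprodVal p n)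
    (ε : MvPolynomial ℕ (ZMod p) →ₐ[ZMod p] ZMod p)
    (hε : ∀ n : ℕ, 1 ≤ n → ε (milnorXi p n) = 0)
    (χ : MvPolynomial ℕ (ZMod p) →ₗ[ZMod p] MvPolynomial ℕ (ZMod p))
    (hχ : ∀ x : MvPolynomial ℕ (ZMod p),
      (LinearMap.mul' (ZMod p) (MvPolynomial ℕ (ZMod p)))
          ((TensorProduct.map χ LinearMap.id) (Δ x)) =
        algebraMap (ZMod p) (MvPolynomial ℕ (ZMod p)) (ε x) ∧
      (LinearMap.mul' (ZMod p) (MvPolynomial ℕ (ZMod p)))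
          ((TensorProduct.map LinearMap.id χ) (Δ x)) =
        algebraMap (ZMod p) (MvPolynomial ℕ (ZMod p)) (ε x))
    (u : (PowerSeries (MvPolynomial ℕ (ZMod p)))ˣ)
    (hu : (u : PowerSeries (MvPolynomial ℕ (ZMod p))) = xiBar p χ)
    (t : ℕ) (ht : 1 ≤ t) :
    PowerSeries.coeff (R := MvPolynomial ℕ (ZMod p)) (p ^ t - 1)
        ((u⁻¹ : (PowerSeries (MvPolynomial ℕ (ZMod p)))ˣ) :
          PowerSeries (MvPolynomial ℕ (ZMod p))) =
      milnorXi p t := by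
  have hp : 1 < p := aux_hp1
  have hone : χ 1 = 1 := aux_chi_one Δ ε χ hχ
  have hpow : ∀ n j : ℕ, χ ((milnorXi p n) ^ (p ^ j)) = (χ (milnorXi p n)) ^ (p ^ j) :=
    fun n j => aux_chi_pow χ hone (fun j' n' hn' => aux_rel2 Δ ε χ hΔ hε hχ j' n' hn') n j
  have hr1 := aux_rel1 Δ ε χ hΔ hε hχ
  have h1t : 1 ≤ p ^ t := Nat.one_le_pow _ _ (by omega)
  set F : PowerSeries (MvPolynomial ℕ (ZMod p)) :=
    ∑ k ∈ Finset.range (t + 1),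
      PowerSeries.C (milnorXi p k) * (xiBar p χ) ^ (p ^ k) *
        PowerSeries.X ^ (p ^ k - 1) with hF
  have hFcoeff : ∀ i, i ≤ p ^ t - 1 →
      PowerSeries.coeff i F = if i = 0 then 1 else 0 :=
    fun i hi => aux_key1 χ hone hpow hr1 t i hi
  have hstep1 : PowerSeries.coeff (p ^ t - 1)
        (F * ((u⁻¹ : (PowerSeries (MvPolynomial ℕ (ZMod p)))ˣ) :
          PowerSeries (MvPolynomial ℕ (ZMod p)))) =
      PowerSeries.coeff (p ^ t - 1)
        ((u⁻¹ : (PowerSeries (MvPolynomial ℕ (ZMod p)))ˣ) :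
          PowerSeries (MvPolynomial ℕ (ZMod p))) := by
    rw [PowerSeries.coeff_mul]
    refine (Finset.sum_eq_single (0, p ^ t - 1) ?_ ?_).trans ?_
    · rintro ⟨i, j⟩ hmem hne
      have hij := Finset.HasAntidiagonal.mem_antidiagonal.mp hmem
      simp only at hij ⊢
      rw [hFcoeff i (by omega), if_neg, zero_mul]
      intro h0
      apply hne
      subst h0
      have hj : j = p ^ t - 1 := by omega
      subst hj
      rfl
    · intro hmem
      exact absurd (Finset.HasAntidiagonal.mem_antidiagonal.mpr (by simp)) hmem
    · simp only
      rw [hFcoeff 0 (by omega), if_pos rfl, one_mul]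
  have hunit : ∀ k : ℕ, (xiBar p χ) ^ (p ^ k) *
        ((u⁻¹ : (PowerSeries (MvPolynomial ℕ (ZMod p)))ˣ) :
          PowerSeries (MvPolynomial ℕ (ZMod p))) = (xiBar p χ) ^ (p ^ k - 1) := by
    intro k
    have h1k : 1 ≤ p ^ k := Nat.one_le_pow _ _ (by omega)
    rw [← hu, ← Units.val_pow_eq_pow_val, ← Units.val_mul, ← Units.val_pow_eq_pow_val]
    congr 1
    have hpk : u ^ (p ^ k - 1) * u = u ^ (p ^ k) := by
      rw [← pow_succ]
      congr 1
      omega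
    rw [← hpk, mul_inv_cancel_right]
  have hstep2 : F * ((u⁻¹ : (PowerSeries (MvPolynomial ℕ (ZMod p)))ˣ) :
        PowerSeries (MvPolynomial ℕ (ZMod p))) =
      ∑ k ∈ Finset.range (t + 1),
        PowerSeries.C (milnorXi p k) * (xiBar p χ) ^ (p ^ k - 1) *
          PowerSeries.X ^ (p ^ k - 1) := by
    rw [hF, Finset.sum_mul]
    refine Finset.sum_congr rfl fun k _ => ?_
    have hcomm : ∀ (A Bq Cq D : PowerSeries (MvPolynomial ℕ (ZMod p))),
        A * Bq * Cq * D = A * (Bq * D) * Cq := fun A Bq Cq D => by ring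
    rw [hcomm, hunit k]
  have hmain : PowerSeries.coeff (p ^ t - 1)
        ((u⁻¹ : (PowerSeries (MvPolynomial ℕ (ZMod p)))ˣ) :
          PowerSeries (MvPolynomial ℕ (ZMod p))) =
      ∑ k ∈ Finset.range (t + 1),
        milnorXi p k * PowerSeries.coeff (p ^ t - p ^ k)
          ((xiBar p χ) ^ (p ^ k - 1)) := by
    rw [← hstep1, hstep2, map_sum]
    refine Finset.sum_congr rfl fun k hk => ?_
    have hkt : k ≤ t := by
      have := Finset.mem_range.mp hk; omega
    have h1k : 1 ≤ p ^ k := Nat.one_le_pow _ _ (by omega)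
    have hlekt : p ^ k ≤ p ^ t := Nat.pow_le_pow_right (by omega) hkt
    have harg : p ^ t - 1 - (p ^ k - 1) = p ^ t - p ^ k := by omega
    rw [PowerSeries.coeff_mul_X_pow', if_pos (by omega), harg, PowerSeries.coeff_C_mul]
  rw [hmain, Finset.sum_range_succ, Finset.sum_eq_zero, zero_add]
  · rw [Nat.sub_self]
    have hconst : PowerSeries.coeff 0 ((xiBar p χ) ^ (p ^ t - 1)) = 1 := by
      rw [PowerSeries.coeff_zero_eq_constantCoeff_apply, map_pow,
        aux_xiBar_const χ, hone, one_pow]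
    rw [hconst, mul_one]
  · intro k hk
    rw [aux_vanish χ t k (Finset.mem_range.mp hk), mul_zero]
end

section
/- Suppose in addition that p is odd. Then for all integers t ≥ 1 and i with 1 ≤ i ≤ p^t − 1, the degree-2(p^t − i − 1) homogeneous component of ξ̄^{i−1} ∈ B̂ equals ξ_s if i = p^t − p^s for some integer s with 0 ≤ s ≤ t − 1 (where ξ_0 = 1), and equals 0 otherwise. -/
set_option linter.unusedSectionVars false
set_option maxHeartbeats 1000000


open TensorProduct

namespace Stmt3Aux

open PowerSeries Finset

abbrev Rg (p : ℕ) := MvPolynomial ℕ (ZMod p)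

noncomputable def xb (p : ℕ) (b : ℕ → Rg p) : PowerSeries (Rg p) :=
  PowerSeries.mk fun m => ∑ n ∈ Finset.range (m + 1), if p ^ n - 1 = m then b n else 0

variable {p : ℕ} [hp : Fact p.Prime] {b : ℕ → Rg p}

lemma hp2 : 2 ≤ p := hp.out.two_le

lemma coeff_xb (m : ℕ) :
    (coeff (R := Rg p) m) (xb p b) = ∑ n ∈ Finset.range (m + 1), if p ^ n - 1 = m then b n else 0 :=
  coeff_mk _ _

lemma coeff_xb_eq {n m : ℕ} (h : p ^ n - 1 = m) : (coeff (R := Rg p) m) (xb p b) = b n := by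
  rw [coeff_xb]
  have hn : n ∈ Finset.range (m + 1) := by
    have := Nat.lt_pow_self (n := n) (by have := @hp2 p hp; omega : 1 < p)
    have hp1 : 1 ≤ p ^ n := Nat.one_le_pow _ _ (by have := @hp2 p hp; omega)
    exact Finset.mem_range.mpr (by omega)
  rw [Finset.sum_eq_single n]
  · simp [h]
  · intro k _ hk
    have : p ^ k ≠ p ^ n := fun hc => hk (Nat.pow_right_injective hp2 hc)
    have hp1 : 1 ≤ p ^ k := Nat.one_le_pow _ _ (by have := @hp2 p hp; omega)
    have hp1' : 1 ≤ p ^ n := Nat.one_le_pow _ _ (by have := @hp2 p hp; omega)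
    simp only [ite_eq_right_iff]
    intro hc; exfalso; omega
  · intro h'; exact absurd hn h'

lemma coeff_xb_ne {m : ℕ} (h : ∀ n, p ^ n - 1 ≠ m) : (coeff (R := Rg p) m) (xb p b) = 0 := by
  rw [coeff_xb]
  exact Finset.sum_eq_zero fun n _ => by simp [h n]

/-- `Rep p r L` : `L` is a sum of `r` numbers of the form `p^n - 1` with `n ≥ 1`. -/
def Rep (p : ℕ) : ℕ → ℕ → Prop
  | 0, L => L = 0
  | (r + 1), L => ∃ n L', 1 ≤ n ∧ L = (p ^ n - 1) + L' ∧ Rep p r L'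

lemma rep_dvd : ∀ {r L : ℕ}, Rep p r L → p ∣ (L + r) := by
  intro r
  induction r with
  | zero => intro L h; cases h; simp
  | succ r ih =>
    intro L h
    obtain ⟨n, L', hn, rfl, hrep⟩ := h
    have h1 : 1 ≤ p ^ n := Nat.one_le_pow _ _ (by have := @hp2 p hp; omega)
    have : (p ^ n - 1 + L') + (r + 1) = p ^ n + (L' + r) := by omega
    rw [this]
    exact dvd_add (dvd_pow_self p (by omega)) (ih hrep)

lemma rep_one {L : ℕ} (h : Rep p 1 L) : ∃ n, 1 ≤ n ∧ L = p ^ n - 1 := by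
  obtain ⟨n, L', hn, rfl, hrep⟩ := h
  cases hrep; exact ⟨n, hn, by omega⟩

lemma xb_pow_support : ∀ r L, (coeff (R := Rg p) L) ((xb p b) ^ r) ≠ 0 → ∃ r' ≤ r, Rep p r' L := by
  intro r
  induction r with
  | zero =>
    intro L h
    rcases Nat.eq_zero_or_pos L with rfl | hL
    · exact ⟨0, le_refl _, rfl⟩
    · exfalso; apply h; rw [pow_zero, coeff_one]; simp; omega
  | succ r ih =>
    intro L h
    rw [pow_succ, coeff_mul] at h
    obtain ⟨⟨a, c⟩, hmem, hne⟩ := Finset.exists_ne_zero_of_sum_ne_zero h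
    have hac : a + c = L := Finset.HasAntidiagonal.mem_antidiagonal.mp hmem
    have h1 : (coeff (R := Rg p) a) ((xb p b) ^ r) ≠ 0 := fun hz => hne (by simp [hz])
    have h2 : (coeff (R := Rg p) c) (xb p b) ≠ 0 := fun hz => hne (by simp [hz])
    obtain ⟨r', hr', hrep⟩ := ih a h1
    by_cases hc : ∃ n, 1 ≤ n ∧ p ^ n - 1 = c
    · obtain ⟨n, hn, hnc⟩ := hc
      exact ⟨r' + 1, by omega, ⟨n, a, hn, by omega, hrep⟩⟩
    · have hc0 : c = 0 := by
        by_contra hc0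
        apply h2
        apply coeff_xb_ne
        intro n
        rcases Nat.eq_zero_or_pos n with rfl | hn
        · simpa using fun h => hc0 h.symm    -- p^0 - 1 = 0 ≠ c
        · exact fun hcc => hc ⟨n, hn, hcc⟩
      exact ⟨r', by omega, by rwa [show L = a by omega] ⟩

lemma coeff_zero_xb_pow (hb0 : b 0 = 1) (r : ℕ) : (coeff (R := Rg p) 0) ((xb p b) ^ r) = 1 := by
  rw [coeff_zero_eq_constantCoeff, map_pow]
  have : (constantCoeff (R := Rg p)) (xb p b) = 1 := by
    rw [← coeff_zero_eq_constantCoeff, coeff_xb_eq (by simp : p ^ 0 - 1 = 0), hb0]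
  rw [this, one_pow]

/-- Frobenius for power-series coefficients in characteristic `p`. -/
lemma coeff_pow_char (φ : PowerSeries (Rg p)) (N : ℕ) :
    (coeff (R := Rg p) N) (φ ^ p) = if p ∣ N then ((coeff (R := Rg p) (N / p)) φ) ^ p else 0 := by
  set q : Polynomial (Rg p) := trunc (N + 1) φ with hq
  have hdvd : (X : PowerSeries (Rg p)) ^ (N + 1) ∣ φ - ↑q := by
    rw [X_pow_dvd_iff]
    intro m hm
    rw [map_sub, Polynomial.coeff_coe, hq, coeff_trunc, if_pos hm, sub_self]
  have hdvd2 : (X : PowerSeries (Rg p)) ^ (N + 1) ∣ φ ^ p - (↑q) ^ p :=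
    hdvd.trans (sub_dvd_pow_sub_pow φ (↑q) p)
  have hco : (coeff (R := Rg p) N) (φ ^ p) = (coeff (R := Rg p) N) ((↑q : PowerSeries (Rg p)) ^ p) := by
    have h0 := X_pow_dvd_iff.mp hdvd2 N (by omega)
    rw [map_sub] at h0
    exact sub_eq_zero.mp h0
  rw [hco, ← Polynomial.coe_pow, Polynomial.coeff_coe]
  rw [← Polynomial.map_frobenius_expand p q, Polynomial.coeff_map, Polynomial.coeff_expand hp.out.pos]
  split
  · rw [frobenius_def, hq, coeff_trunc, if_pos (Nat.lt_succ_of_le (Nat.div_le_self N p))]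
  · rw [map_zero]


lemma coeff_xb_pow_pn (hb0 : b 0 = 1) :
    ∀ r, r ≤ p - 1 → ∀ n, 1 ≤ n →
      (coeff (R := Rg p) (p ^ n - 1)) ((xb p b) ^ r) = (r : Rg p) * b n := by
  intro r
  induction r with
  | zero =>
    intro _ n hn
    have h1 : 2 ≤ p ^ n := le_trans hp2 (Nat.le_self_pow (by omega) p)
    rw [pow_zero, coeff_one, if_neg (by omega)]
    simp
  | succ r ih =>
    intro hr n hn
    have hple := @hp2 p hp
    have h1 : 2 ≤ p ^ n := le_trans hp2 (Nat.le_self_pow (by omega) p)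
    set N := p ^ n - 1 with hN
    rw [pow_succ, coeff_mul, Finset.Nat.sum_antidiagonal_eq_sum_range_succ_mk]
    have hterm : ∀ k ∈ Finset.range (N + 1),
        (coeff (R := Rg p) k) ((xb p b) ^ r) * (coeff (R := Rg p) (N - k)) (xb p b) =
        (if k = 0 then b n else 0) + (if k = N then (r : Rg p) * b n else 0) := by
      intro k hk
      rw [Finset.mem_range] at hk
      have hkN : k ≤ N := by omega
      rcases eq_or_ne k 0 with rfl | hk0
      · rw [coeff_zero_xb_pow hb0, one_mul, Nat.sub_zero,
          coeff_xb_eq (show p ^ n - 1 = N from rfl)]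
        rw [if_pos rfl, if_neg (by omega), add_zero]
      rcases eq_or_ne k N with rfl | hkN'
      · rw [Nat.sub_self, coeff_xb_eq (show p ^ 0 - 1 = 0 by simp), hb0, mul_one,
          ih (by omega) n hn, if_neg hk0, if_pos rfl, zero_add]
      · rw [if_neg hk0, if_neg hkN', add_zero]
        have hklt : k < N := by omega
        by_cases hc : ∀ m, p ^ m - 1 ≠ N - k
        · rw [coeff_xb_ne hc, mul_zero]
        · push_neg at hc
          obtain ⟨m, hm⟩ := hc
          have hm0 : 1 ≤ m := by
            rcases Nat.eq_zero_or_pos m with rfl | h; · simp at hm; omega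
            · exact h
          have hpm : 1 ≤ p ^ m := Nat.one_le_pow _ _ (by omega)
          have hmn : m < n := by
            have : p ^ m < p ^ n := by omega
            exact (Nat.pow_lt_pow_iff_right (by omega)).mp this
          have hkval : k = p ^ n - p ^ m := by omega
          have hz : (coeff (R := Rg p) k) ((xb p b) ^ r) = 0 := by
            by_contra hnz
            obtain ⟨r', hr', hrep⟩ := xb_pow_support r k hnz
            have hdvd1 : p ∣ k + r' := rep_dvd hrep
            have hdvdk : p ∣ k := by
              rw [hkval]
              exact Nat.dvd_sub (dvd_pow_self p (by omega)) (dvd_pow_self p (by omega))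
            have hdvdr' : p ∣ r' := by
              have := Nat.dvd_sub hdvd1 hdvdk
              simpa using this
            have hr'0 : r' = 0 := by
              rcases Nat.eq_zero_or_pos r' with h | h; · exact h
              exfalso; have := Nat.le_of_dvd h hdvdr'; omega
            subst hr'0
            have : k = 0 := hrep
            have : p ^ m < p ^ n := Nat.pow_lt_pow_right (by omega) hmn
            omega
          rw [hz, zero_mul]
    refine (Finset.sum_congr rfl hterm).trans ?_
    rw [Finset.sum_add_distrib,
      Finset.sum_ite_eq' (Finset.range (N + 1)) 0 (fun _ => b n),
      Finset.sum_ite_eq' (Finset.range (N + 1)) N (fun _ => (r : Rg p) * b n),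
      if_pos (Finset.mem_range.mpr (by omega)), if_pos (Finset.mem_range.mpr (by omega))]
    push_cast
    ring


lemma pow_decomp (j : ℕ) :
    (xb p b) ^ j = ((xb p b) ^ (j / p)) ^ p * (xb p b) ^ (j % p) := by
  rw [← pow_mul, ← pow_add]
  congr 1
  rw [mul_comm]
  exact (Nat.div_add_mod j p).symm

lemma red0 (hb0 : b 0 = 1) {j N : ℕ} (h : p ∣ (j + N + 1)) :
    (coeff (R := Rg p) N) ((xb p b) ^ j) =
      if p ∣ N ∧ j % p = p - 1 then ((coeff (R := Rg p) (N / p)) ((xb p b) ^ (j / p))) ^ p else 0 := by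
  have hple := @hp2 p hp
  set q := j / p with hq
  set r := j % p with hr
  have hrlt : r < p := Nat.mod_lt _ (by omega)
  have hjqr : p * q + r = j := Nat.div_add_mod j p
  rw [pow_decomp j, coeff_mul, Finset.Nat.sum_antidiagonal_eq_sum_range_succ_mk]
  have hNr1 : p ∣ N + r + 1 := by
    have h2 : p ∣ j - r := ⟨q, by omega⟩
    have := Nat.dvd_sub h h2
    have he : j + N + 1 - (j - r) = N + r + 1 := by omega
    rwa [he] at this
  have hterm : ∀ k ∈ Finset.range (N + 1),
      (coeff (R := Rg p) k) (((xb p b) ^ q) ^ p) * (coeff (R := Rg p) (N - k)) ((xb p b) ^ r) =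
      if k = N ∧ (p ∣ N ∧ r = p - 1) then ((coeff (R := Rg p) (N / p)) ((xb p b) ^ q)) ^ p else 0 := by
    intro k hk
    rw [Finset.mem_range] at hk
    have hkN : k ≤ N := by omega
    rw [coeff_pow_char]
    by_cases hdk : p ∣ k
    · rw [if_pos hdk]
      by_cases hz : (coeff (R := Rg p) (N - k)) ((xb p b) ^ r) = 0
      · rw [hz, mul_zero]
        by_cases hcond : k = N ∧ (p ∣ N ∧ r = p - 1)
        · exfalso
          obtain ⟨rfl, -, -⟩ := hcond
          rw [Nat.sub_self, coeff_zero_xb_pow hb0] at hz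
          exact one_ne_zero hz
        · rw [if_neg hcond]
      · obtain ⟨r', hr', hrep⟩ := xb_pow_support r (N - k) hz
        have hd1 : p ∣ (N - k) + r' := rep_dvd hrep
        have hd2 : p ∣ N + r' := by
          have : (N - k + r') + k = N + r' := by omega
          rw [← this]; exact dvd_add hd1 hdk
        have hd3 : p ∣ (N + r + 1) - (N + r') := Nat.dvd_sub hNr1 hd2
        have he3 : (N + r + 1) - (N + r') = r + 1 - r' := by omega
        rw [he3] at hd3
        have hple3 : p ≤ r + 1 - r' := Nat.le_of_dvd (by omega) hd3
        have hr0 : r' = 0 ∧ r = p - 1 := by omega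
        have hNk : N - k = 0 := by rw [hr0.1] at hrep; exact hrep
        have hkNe : k = N := by omega
        subst hkNe
        rw [if_pos ⟨rfl, hdk, hr0.2⟩, Nat.sub_self, coeff_zero_xb_pow hb0, mul_one]
    · rw [if_neg hdk, zero_mul]
      rw [if_neg (by rintro ⟨rfl, hN, -⟩; exact hdk hN)]
  refine (Finset.sum_congr rfl hterm).trans ?_
  by_cases hcond : p ∣ N ∧ r = p - 1
  · simp only [hcond, and_true]
    rw [Finset.sum_ite_eq' (Finset.range (N + 1)) N
        (fun _ => ((coeff (R := Rg p) (N / p)) ((xb p b) ^ q)) ^ p),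
      if_pos (Finset.mem_range.mpr (by omega))]
    simp
  · rw [if_neg hcond]
    exact Finset.sum_eq_zero fun k _ => by rw [if_neg (by tauto)]


lemma mod_helper {j a : ℕ} (ha : 1 ≤ a) (ha2 : a ≤ p) (h : p ∣ j + a) : j % p = p - a := by
  have hple := @hp2 p hp
  obtain ⟨D, hD⟩ := h
  have hD1 : 1 ≤ D := by
    rcases Nat.eq_zero_or_pos D with rfl | h; · simp at hD; omega
    · exact h
  have hj : j = p * (D - 1) + (p - a) := by
    have : p * (D - 1) + p = p * D := by
      rw [Nat.mul_sub_one]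
      have : p ≤ p * D := Nat.le_mul_of_pos_right p hD1
      omega
    omega
  rw [hj, Nat.mul_add_mod]
  exact Nat.mod_eq_of_lt (by omega)

lemma pcancel {x y : ℕ} (h : p * x = p * y) : x = y :=
  Nat.eq_of_mul_eq_mul_left (by have := @hp2 p hp; omega) h

theorem main (hb0 : b 0 = 1)
    (hrec : ∀ u, 1 ≤ u →
      ∑ k ∈ Finset.range (u + 1), (milnorXi p (u - k)) ^ (p ^ k) * b k = 0) :
    ∀ t : ℕ,
      (∀ j N, j + N + 1 = p ^ t →
        (coeff (R := Rg p) N) ((xb p b) ^ j) = if N = 0 then 1 else 0) ∧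
      (∀ c, c < t → ∀ j N, j + N + 1 + p ^ c = p ^ t →
        ((∀ m, p ^ (c + m) ≠ N + p ^ c) → (coeff (R := Rg p) N) ((xb p b) ^ j) = 0) ∧
        (∀ m, p ^ (c + m) = N + p ^ c →
          (coeff (R := Rg p) N) ((xb p b) ^ j) = (milnorXi p m) ^ (p ^ c))) := by
  have hple := @hp2 p hp
  intro t
  induction t using Nat.strong_induction_on with
  | _ t IH =>
  rcases t with - | t'
  · constructor
    · intro j N hsum
      simp only [pow_zero] at hsum
      have hj : j = 0 := by omega
      have hN : N = 0 := by omega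
      subst hj; subst hN
      rw [pow_zero, coeff_zero_eq_constantCoeff, map_one, if_pos rfl]
    · intro c hc; omega
  have hppow : p ^ (t' + 1) = p * p ^ t' := by rw [pow_succ, mul_comm]
  constructor
  · -- Part 1 : j + N + 1 = p ^ (t'+1)
    intro j N hsum
    have hd : p ∣ j + N + 1 := by rw [hsum, hppow]; exact Dvd.intro _ rfl
    rw [red0 hb0 hd]
    by_cases hcond : p ∣ N ∧ j % p = p - 1
    · rw [if_pos hcond]
      obtain ⟨⟨K, hK⟩, hjr⟩ := hcond
      have hNp : N / p = K := by rw [hK]; exact Nat.mul_div_cancel_left K (by omega)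
      have hqj : p * (j / p) + (p - 1) = j := by
        have h0 := Nat.div_add_mod j p; rw [hjr] at h0; exact h0
      have hqK : j / p + K + 1 = p ^ t' := by
        apply pcancel (p := p)
        have heq : p * (j / p + K + 1) = p * (j / p) + p * K + p := by ring
        rw [heq]
        rw [hppow] at hsum
        omega
      rw [hNp, (IH t' (by omega)).1 (j / p) K hqK]
      rcases eq_or_ne K 0 with rfl | hK0
      · rw [if_pos rfl, one_pow, if_pos (by omega)]
      · rw [if_neg hK0, zero_pow (by omega), if_neg (by
          intro h0
          apply hK0
          rw [h0] at hK
          rcases Nat.mul_eq_zero.mp hK.symm with h | h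
          · omega
          · exact h)]
    · rw [if_neg hcond]
      rcases eq_or_ne N 0 with rfl | hN0
      · exfalso
        apply hcond
        refine ⟨dvd_zero p, mod_helper (by omega) (by omega) ?_⟩
        have : j + 1 = p ^ (t' + 1) := by omega
        rw [this, hppow]; exact Dvd.intro _ rfl
      · rw [if_neg hN0]
  · -- Part 2
    intro c hc j N hsum
    rcases c with - | c'
    · -- c = 0 : the interesting case
      simp only [pow_zero] at hsum
      simp only [zero_add, pow_zero, pow_one]
      rw [hppow] at hsum
      have hrlt : j % p < p := Nat.mod_lt _ (by omega)
      have hdmod := Nat.div_add_mod j p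
      have hNr2 : p ∣ N + (j % p) + 2 := by
        have h1 : p ∣ j - j % p := ⟨j / p, by omega⟩
        have h2 : p ∣ j + N + 2 := by
          have : j + N + 2 = p * p ^ t' := by omega
          exact this ▸ Dvd.intro _ rfl
        have h3 := Nat.dvd_sub h2 h1
        have he : j + N + 2 - (j - j % p) = N + (j % p) + 2 := by omega
        rwa [he] at h3
      have hS : (coeff (R := Rg p) N) ((xb p b) ^ j) =
          ∑ k ∈ Finset.range (N + 1),
            (coeff (R := Rg p) k) (((xb p b) ^ (j / p)) ^ p) *
              (coeff (R := Rg p) (N - k)) ((xb p b) ^ (j % p)) := by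
        rw [pow_decomp j, coeff_mul, Finset.Nat.sum_antidiagonal_eq_sum_range_succ_mk]
      by_cases hr1 : j % p = p - 1
      · -- the main case
        rw [hr1] at hS
        have hdN1 : p ∣ N + 1 := by
          have h3 := Nat.dvd_sub hNr2 (dvd_refl p)
          have he : N + (j % p) + 2 - p = N + 1 := by omega
          rwa [he] at h3
        have hqj : p * (j / p) + (p - 1) = j := by rw [hr1] at hdmod; exact hdmod
        have harith : ∀ n', p ^ (n' + 1) ≤ N + 1 →
            p * ((N + 1 - p ^ (n' + 1)) / p) + p ^ (n' + 1) = N + 1 ∧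
            j / p + (N + 1 - p ^ (n' + 1)) / p + 1 + p ^ n' = p ^ t' ∧ n' < t' := by
          intro n' hle
          have hdvd : p ∣ N + 1 - p ^ (n' + 1) :=
            Nat.dvd_sub hdN1 (dvd_pow_self p (by omega))
          have h1 : p * ((N + 1 - p ^ (n' + 1)) / p) = N + 1 - p ^ (n' + 1) :=
            Nat.mul_div_cancel' hdvd
          have hpn : p ^ (n' + 1) = p * p ^ n' := by rw [pow_succ, mul_comm]
          have h2 : j / p + (N + 1 - p ^ (n' + 1)) / p + 1 + p ^ n' = p ^ t' := by
            apply pcancel (p := p)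
            have heq : p * (j / p + (N + 1 - p ^ (n' + 1)) / p + 1 + p ^ n') =
                p * (j / p) + p * ((N + 1 - p ^ (n' + 1)) / p) + p + p * p ^ n' := by ring
            rw [heq, h1]
            omega
          refine ⟨by omega, h2, ?_⟩
          have hlt : p ^ n' < p ^ t' := by
            rw [← h2]
            exact Nat.lt_add_of_pos_left (Nat.succ_pos _)
          exact (Nat.pow_lt_pow_iff_right (by omega : 1 < p)).mp hlt
        have hT : (coeff (R := Rg p) N) ((xb p b) ^ j) =
            ∑ n ∈ Finset.range (N + 1),
              if 1 ≤ n ∧ p ^ n ≤ N + 1 then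
                ((coeff (R := Rg p) ((N + 1 - p ^ n) / p)) ((xb p b) ^ (j / p))) ^ p *
                  (((p - 1 : ℕ) : Rg p) * b n)
              else 0 := by
          rw [hS]
          have hterm : ∀ k ∈ Finset.range (N + 1),
              (coeff (R := Rg p) k) (((xb p b) ^ (j / p)) ^ p) *
                (coeff (R := Rg p) (N - k)) ((xb p b) ^ (p - 1)) =
              ∑ n ∈ Finset.range (N + 1),
                if 1 ≤ n ∧ k + (p ^ n - 1) = N then
                  ((coeff (R := Rg p) (k / p)) ((xb p b) ^ (j / p))) ^ p *
                    (((p - 1 : ℕ) : Rg p) * b n)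
                else 0 := by
            intro k hk
            rw [Finset.mem_range] at hk
            have hkN : k ≤ N := by omega
            rw [coeff_pow_char]
            by_cases hex : ∃ n, 1 ≤ n ∧ k + (p ^ n - 1) = N
            · obtain ⟨n, hn1, hkn⟩ := hex
              have hpn1 : 1 ≤ p ^ n := Nat.one_le_pow _ _ (by omega)
              have hco : (coeff (R := Rg p) (N - k)) ((xb p b) ^ (p - 1)) =
                  ((p - 1 : ℕ) : Rg p) * b n := by
                rw [show N - k = p ^ n - 1 by omega]
                exact coeff_xb_pow_pn hb0 (p - 1) (le_refl _) n hn1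
              have hdk : p ∣ k := by
                have : k = (N + 1) - p ^ n := by omega
                rw [this]
                exact Nat.dvd_sub hdN1 (dvd_pow_self p (by omega))
              rw [if_pos hdk, hco]
              rw [Finset.sum_eq_single n]
              · rw [if_pos ⟨hn1, hkn⟩]
              · intro n' hn' hne
                rw [if_neg]
                rintro ⟨h1, h2⟩
                apply hne
                apply Nat.pow_right_injective hple
                show p ^ n' = p ^ n
                have hpn1' : 1 ≤ p ^ n' := Nat.one_le_pow _ _ (by omega)
                omega
              · intro hn
                exfalso
                apply hn
                rw [Finset.mem_range]
                have := Nat.lt_pow_self (n := n) (by omega : 1 < p)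
                omega
            · have hRHS : ∑ n ∈ Finset.range (N + 1),
                  (if 1 ≤ n ∧ k + (p ^ n - 1) = N then
                    ((coeff (R := Rg p) (k / p)) ((xb p b) ^ (j / p))) ^ p *
                      (((p - 1 : ℕ) : Rg p) * b n)
                  else 0) = 0 :=
                Finset.sum_eq_zero fun n _ => by
                  rw [if_neg]; rintro ⟨h1, h2⟩; exact hex ⟨n, h1, h2⟩
              rw [hRHS]
              by_cases hdk : p ∣ k
              · rw [if_pos hdk]
                suffices hz : (coeff (R := Rg p) (N - k)) ((xb p b) ^ (p - 1)) = 0 by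
                  rw [hz, mul_zero]
                by_contra hnz
                obtain ⟨r', hr', hrep⟩ := xb_pow_support (p - 1) (N - k) hnz
                have hd1 : p ∣ (N - k) + r' := rep_dvd hrep
                have hd2 : p ∣ N + r' := by
                  have : (N - k + r') + k = N + r' := by omega
                  rw [← this]; exact dvd_add hd1 hdk
                rcases Nat.eq_zero_or_pos r' with hr0 | hr0
                · rw [hr0] at hrep
                  have hNk : N - k = 0 := hrep
                  have hkN' : k = N := by omega
                  have : p ∣ 1 := by
                    have h4 := Nat.dvd_sub hdN1 (hkN' ▸ hdk)
                    have he : N + 1 - N = 1 := by omega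
                    rwa [he] at h4
                  have := Nat.le_of_dvd (by omega) this
                  omega
                · have hd3 : p ∣ (N + r') - (N + 1) := Nat.dvd_sub hd2 hdN1
                  have he3 : (N + r') - (N + 1) = r' - 1 := by omega
                  rw [he3] at hd3
                  have hr'1 : r' = 1 := by
                    rcases Nat.eq_zero_or_pos (r' - 1) with h | h
                    · omega
                    · have := Nat.le_of_dvd h hd3; omega
                  rw [hr'1] at hrep
                  obtain ⟨n, hn1, hnk⟩ := rep_one hrep
                  exact hex ⟨n, hn1, by omega⟩
              · rw [if_neg hdk, zero_mul]
          refine (Finset.sum_congr rfl hterm).trans ?_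
          rw [Finset.sum_comm]
          refine Finset.sum_congr rfl fun n _ => ?_
          by_cases hn1 : 1 ≤ n
          · by_cases hle : p ^ n ≤ N + 1
            · have hpn1 : 1 ≤ p ^ n := Nat.one_le_pow _ _ (by omega)
              have hpn2 : 2 ≤ p ^ n := by
                have : p ≤ p ^ n := Nat.le_self_pow (by omega) p
                omega
              rw [if_pos ⟨hn1, hle⟩, Finset.sum_eq_single (N + 1 - p ^ n)]
              · rw [if_pos ⟨hn1, by omega⟩]
              · intro k _ hne
                rw [if_neg]
                rintro ⟨-, h2⟩
                exact hne (by omega)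
              · intro hn
                exfalso
                apply hn
                rw [Finset.mem_range]
                omega
            · rw [if_neg (by rintro ⟨-, h⟩; exact hle h)]
              exact Finset.sum_eq_zero fun k _ => by
                rw [if_neg]
                rintro ⟨-, h2⟩
                have : 1 ≤ p ^ n := Nat.one_le_pow _ _ (by omega)
                omega
          · rw [if_neg (by rintro ⟨h, -⟩; exact hn1 h)]
            exact Finset.sum_eq_zero fun k _ => by
              rw [if_neg]; rintro ⟨h, -⟩; exact hn1 h
        constructor
        · -- no m
          intro hno
          rw [hT]
          refine Finset.sum_eq_zero fun n _ => ?_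
          by_cases hcond : 1 ≤ n ∧ p ^ n ≤ N + 1
          · obtain ⟨hn1, hle⟩ := hcond
            obtain ⟨n', rfl⟩ : ∃ n', n = n' + 1 := ⟨n - 1, by omega⟩
            obtain ⟨ha1, ha2, ha3⟩ := harith n' hle
            rw [if_pos ⟨hn1, hle⟩]
            have hz : (coeff (R := Rg p) ((N + 1 - p ^ (n' + 1)) / p)) ((xb p b) ^ (j / p)) = 0 := by
              apply ((IH t' (by omega)).2 n' ha3 (j / p) _ (by omega)).1
              intro m' hm'
              apply hno (n' + m' + 1)
              have he : p ^ (n' + m' + 1) = p * p ^ (n' + m') := by rw [pow_succ, mul_comm]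
              have he2 : p * p ^ (n' + m') = p * ((N + 1 - p ^ (n' + 1)) / p) + p * p ^ n' := by
                rw [hm']; ring
              have hpn : p ^ (n' + 1) = p * p ^ n' := by rw [pow_succ, mul_comm]
              omega
            rw [hz, zero_pow (by omega), zero_mul]
          · rw [if_neg hcond]
        · -- given m
          intro m hm
          have hm1 : 1 ≤ m := by
            rcases Nat.eq_zero_or_pos m with rfl | h
            · exfalso
              rw [pow_zero] at hm
              have := Nat.le_of_dvd (by omega) (hm ▸ hdN1)
              omega
            · exact h
          rw [hT]
          have hmN : m ≤ N := by
            have h1 := Nat.lt_pow_self (n := m) (by omega : 1 < p)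
            omega
          have hstep : ∀ n ∈ Finset.range (N + 1),
              (if 1 ≤ n ∧ p ^ n ≤ N + 1 then
                ((coeff (R := Rg p) ((N + 1 - p ^ n) / p)) ((xb p b) ^ (j / p))) ^ p *
                  (((p - 1 : ℕ) : Rg p) * b n)
              else 0) =
              if 1 ≤ n ∧ n ≤ m then
                (milnorXi p (m - n)) ^ (p ^ n) * (((p - 1 : ℕ) : Rg p) * b n)
              else 0 := by
            intro n _
            have hiff : (1 ≤ n ∧ p ^ n ≤ N + 1) ↔ (1 ≤ n ∧ n ≤ m) := by
              constructor
              · rintro ⟨h1, h2⟩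
                exact ⟨h1, (Nat.pow_le_pow_iff_right (by omega : 1 < p)).mp (by omega)⟩
              · rintro ⟨h1, h2⟩
                exact ⟨h1, by rw [← hm]; exact Nat.pow_le_pow_right (by omega) h2⟩
            by_cases hcond : 1 ≤ n ∧ n ≤ m
            · rw [if_pos (hiff.mpr hcond), if_pos hcond]
              obtain ⟨hn1, hnm⟩ := hcond
              obtain ⟨n', rfl⟩ : ∃ n', n = n' + 1 := ⟨n - 1, by omega⟩
              have hle : p ^ (n' + 1) ≤ N + 1 := (hiff.mpr ⟨hn1, hnm⟩).2
              obtain ⟨ha1, ha2, ha3⟩ := harith n' hle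
              congr 1
              have hIH := ((IH t' (by omega)).2 n' ha3 (j / p)
                ((N + 1 - p ^ (n' + 1)) / p) (by omega)).2 (m - (n' + 1)) (by
                  apply pcancel (p := p)
                  have he1 : p * p ^ (n' + (m - (n' + 1))) = p ^ m := by
                    rw [← pow_succ']
                    congr 1
                    omega
                  have hpn : p ^ (n' + 1) = p * p ^ n' := by rw [pow_succ, mul_comm]
                  have he2 : p * ((N + 1 - p ^ (n' + 1)) / p + p ^ n') =
                      p * ((N + 1 - p ^ (n' + 1)) / p) + p * p ^ n' := by ring
                  rw [he1, he2, hm]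
                  omega)
              rw [hIH, ← pow_mul, show p ^ n' * p = p ^ (n' + 1) from (pow_succ p n').symm]
            · rw [if_neg (fun h => hcond (hiff.mp h)), if_neg hcond]
          refine (Finset.sum_congr rfl hstep).trans ?_
          rw [← Finset.sum_subset (Finset.range_subset_range.mpr (by omega : m + 1 ≤ N + 1))
            (fun x hx hnx => by
              rw [if_neg]
              rintro ⟨-, h2⟩
              rw [Finset.mem_range] at hnx
              rw [Finset.mem_range] at hx
              omega)]
          have hcast : ((p - 1 : ℕ) : Rg p) = -1 := by
            rw [Nat.cast_sub (by omega : 1 ≤ p), Nat.cast_one, CharP.cast_eq_zero, zero_sub]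
          have hterm2 : ∀ n ∈ Finset.range (m + 1),
              (if 1 ≤ n ∧ n ≤ m then
                (milnorXi p (m - n)) ^ (p ^ n) * (((p - 1 : ℕ) : Rg p) * b n)
              else 0) =
              if 1 ≤ n then -((milnorXi p (m - n)) ^ (p ^ n) * b n) else 0 := by
            intro n hn
            rw [Finset.mem_range] at hn
            by_cases h1 : 1 ≤ n
            · rw [if_pos ⟨h1, by omega⟩, if_pos h1, hcast]; ring
            · rw [if_neg (fun h => h1 h.1), if_neg h1]
          refine (Finset.sum_congr rfl hterm2).trans ?_
          have hrec' := hrec m hm1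
          rw [Finset.sum_range_succ'] at hrec' ⊢
          have e0 : (if 1 ≤ 0 then -((milnorXi p (m - 0)) ^ (p ^ 0) * b 0) else 0) = 0 := by
            rw [if_neg (by omega)]
          rw [e0, add_zero]
          have hcongr : ∀ i ∈ Finset.range m,
              (if 1 ≤ i + 1 then -((milnorXi p (m - (i + 1))) ^ (p ^ (i + 1)) * b (i + 1)) else 0) =
              -((milnorXi p (m - (i + 1))) ^ (p ^ (i + 1)) * b (i + 1)) :=
            fun i _ => if_pos (by omega)
          refine (Finset.sum_congr rfl hcongr).trans ?_
          rw [Finset.sum_neg_distrib]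
          have h0 : (milnorXi p (m - 0)) ^ (p ^ 0) * b 0 = milnorXi p m := by simp [hb0]
          rw [h0] at hrec'
          rw [eq_neg_of_add_eq_zero_left hrec', neg_neg]
      · -- j % p ≠ p - 1
        by_cases hr2 : j % p = p - 2
        · -- r = p - 2
          rw [hr2] at hS
          have hqj : p * (j / p) + (p - 2) = j := by rw [hr2] at hdmod; exact hdmod
          have hdN : p ∣ N := by
            rw [hr2] at hNr2
            have he : N + (p - 2) + 2 = N + p := by omega
            rw [he] at hNr2
            have h4 := Nat.dvd_sub hNr2 (dvd_refl p)
            have he2 : N + p - p = N := by omega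
            rwa [he2] at h4
          obtain ⟨K, hK⟩ := hdN
          have hNp : N / p = K := by rw [hK]; exact Nat.mul_div_cancel_left K (by omega)
          have key : (coeff (R := Rg p) N) ((xb p b) ^ j) =
              ((coeff (R := Rg p) K) ((xb p b) ^ (j / p))) ^ p := by
            rw [hS]
            have hterm : ∀ k ∈ Finset.range (N + 1),
                (coeff (R := Rg p) k) (((xb p b) ^ (j / p)) ^ p) *
                  (coeff (R := Rg p) (N - k)) ((xb p b) ^ (p - 2)) =
                if k = N then ((coeff (R := Rg p) K) ((xb p b) ^ (j / p))) ^ p else 0 := by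
              intro k hk
              rw [Finset.mem_range] at hk
              have hkN : k ≤ N := by omega
              rw [coeff_pow_char]
              by_cases hdk : p ∣ k
              · rw [if_pos hdk]
                by_cases hz : (coeff (R := Rg p) (N - k)) ((xb p b) ^ (p - 2)) = 0
                · rw [hz, mul_zero]
                  rw [if_neg]
                  rintro rfl
                  rw [Nat.sub_self, coeff_zero_xb_pow hb0] at hz
                  exact one_ne_zero hz
                · obtain ⟨r', hr', hrep⟩ := xb_pow_support (p - 2) (N - k) hz
                  have hd1 : p ∣ (N - k) + r' := rep_dvd hrep
                  have hd2 : p ∣ N + r' := by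
                    have : (N - k + r') + k = N + r' := by omega
                    rw [← this]; exact dvd_add hd1 hdk
                  have hd3 : p ∣ (N + r') - N := Nat.dvd_sub hd2 ⟨K, hK⟩
                  have he3 : (N + r') - N = r' := by omega
                  rw [he3] at hd3
                  have hr'0 : r' = 0 := by
                    rcases Nat.eq_zero_or_pos r' with h | h
                    · exact h
                    · exfalso; have := Nat.le_of_dvd h hd3; omega
                  rw [hr'0] at hrep
                  have hNk : N - k = 0 := hrep
                  have hkNe : k = N := by omega
                  subst hkNe
                  rw [if_pos rfl, Nat.sub_self, coeff_zero_xb_pow hb0, mul_one, hNp]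
              · rw [if_neg hdk, zero_mul]
                rw [if_neg]
                rintro rfl
                exact hdk ⟨K, hK⟩
            refine (Finset.sum_congr rfl hterm).trans ?_
            rw [Finset.sum_ite_eq' (Finset.range (N + 1)) N
                (fun _ => ((coeff (R := Rg p) K) ((xb p b) ^ (j / p))) ^ p),
              if_pos (Finset.mem_range.mpr (by omega))]
          have hqK : j / p + K + 1 = p ^ t' := by
            apply pcancel (p := p)
            have hx : p - 2 + 2 = p := by omega
            have heq : p * (j / p + K + 1) = p * (j / p) + p * K + p := by ring
            rw [heq]
            linarith [hqj, hK, hsum, hx]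
          have hIH := (IH t' (by omega)).1 (j / p) K hqK
          constructor
          · intro hno
            have hK0 : K ≠ 0 := by
              intro h0
              apply hno 0
              rw [pow_zero]
              rw [h0, mul_zero] at hK
              omega
            rw [key, hIH, if_neg hK0, zero_pow (by omega)]
          · intro m hm
            rcases Nat.eq_zero_or_pos m with rfl | hm1
            · rw [pow_zero] at hm
              have hN0 : N = 0 := by omega
              have hK0 : K = 0 := by
                rw [hN0] at hK
                rcases Nat.mul_eq_zero.mp hK.symm with h | h
                · omega
                · exact h
              rw [key, hIH, if_pos hK0, one_pow]
              simp [milnorXi]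
            · exfalso
              have h5 : p ∣ N + 1 := by
                rw [← hm]; exact dvd_pow_self p (by omega)
              have h6 : p ∣ N := ⟨K, hK⟩
              have h7 := Nat.dvd_sub h5 h6
              have he : N + 1 - N = 1 := by omega
              rw [he] at h7
              have := Nat.le_of_dvd (by omega) h7
              omega
        · -- j % p ∉ {p - 1, p - 2} : everything vanishes
          have hz : (coeff (R := Rg p) N) ((xb p b) ^ j) = 0 := by
            rw [hS]
            refine Finset.sum_eq_zero fun k hk => ?_
            rw [Finset.mem_range] at hk
            have hkN : k ≤ N := by omega
            rw [coeff_pow_char]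
            by_cases hdk : p ∣ k
            · rw [if_pos hdk]
              suffices hz2 : (coeff (R := Rg p) (N - k)) ((xb p b) ^ (j % p)) = 0 by
                rw [hz2, mul_zero]
              by_contra hnz
              obtain ⟨r', hr', hrep⟩ := xb_pow_support (j % p) (N - k) hnz
              have hd1 : p ∣ (N - k) + r' := rep_dvd hrep
              have hd2 : p ∣ N + r' := by
                have : (N - k + r') + k = N + r' := by omega
                rw [← this]; exact dvd_add hd1 hdk
              have hd3 : p ∣ (N + (j % p) + 2) - (N + r') := Nat.dvd_sub hNr2 hd2
              have he3 : (N + (j % p) + 2) - (N + r') = (j % p) + 2 - r' := by omega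
              rw [he3] at hd3
              have := Nat.le_of_dvd (by omega) hd3
              omega
            · rw [if_neg hdk, zero_mul]
          constructor
          · intro _; exact hz
          · intro m hm
            exfalso
            rcases Nat.eq_zero_or_pos m with rfl | hm1
            · rw [pow_zero] at hm
              have hN0 : N = 0 := by omega
              have hd : p ∣ j + 2 := by
                have he : j + 2 = p * p ^ t' := by omega
                rw [he]; exact Dvd.intro _ rfl
              have := mod_helper (p := p) (by omega) (by omega) hd
              omega
            · have h5 : p ∣ N + 1 := by
                rw [← hm]; exact dvd_pow_self p (by omega)
              have hd : p ∣ j + 1 := by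
                have h6 : p ∣ p * p ^ t' := Dvd.intro _ rfl
                have h7 := Nat.dvd_sub h6 h5
                have he : p * p ^ t' - (N + 1) = j + 1 := by omega
                rwa [he] at h7
              have := mod_helper (p := p) (by omega) (by omega) hd
              omega
    · -- c = c' + 1
      have hd : p ∣ j + N + 1 := by
        have h1 : p ∣ p ^ (t' + 1) := dvd_pow_self p (by omega)
        have h2 : p ∣ p ^ (c' + 1) := dvd_pow_self p (by omega)
        have h3 : j + N + 1 = p ^ (t' + 1) - p ^ (c' + 1) := by omega
        rw [h3]; exact Nat.dvd_sub h1 h2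
      have hppc : p ^ (c' + 1) = p * p ^ c' := by rw [pow_succ, mul_comm]
      constructor
      · -- no m
        intro hno
        rw [red0 hb0 hd]
        by_cases hcond : p ∣ N ∧ j % p = p - 1
        · rw [if_pos hcond]
          obtain ⟨⟨K, hK⟩, hjr⟩ := hcond
          have hNp : N / p = K := by rw [hK]; exact Nat.mul_div_cancel_left K (by omega)
          have hqj : p * (j / p) + (p - 1) = j := by
            have h0 := Nat.div_add_mod j p; rw [hjr] at h0; exact h0
          have hqK : j / p + K + 1 + p ^ c' = p ^ t' := by
            apply pcancel (p := p)
            have heq : p * (j / p + K + 1 + p ^ c') =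
                p * (j / p) + p * K + p + p * p ^ c' := by ring
            rw [heq]
            rw [hppow, hppc] at hsum
            omega
          have hIH := ((IH t' (by omega)).2 c' (by omega) (j / p) K (by omega)).1
          rw [hNp, hIH, zero_pow (by omega)]
          intro m hm
          apply hno m
          have e1 : p ^ ((c' + 1) + m) = p * p ^ (c' + m) := by
            rw [show (c' + 1) + m = (c' + m) + 1 by omega, pow_succ, mul_comm]
          rw [e1, hm, hK, hppc]
          ring
        · rw [if_neg hcond]
      · -- given m
        intro m hm
        have hdN : p ∣ N := by
          have h1 : p ∣ p ^ ((c' + 1) + m) := dvd_pow_self p (by omega)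
          have h2 : p ∣ p ^ (c' + 1) := dvd_pow_self p (by omega)
          have h3 : N = p ^ ((c' + 1) + m) - p ^ (c' + 1) := by omega
          rw [h3]; exact Nat.dvd_sub h1 h2
        have hjr : j % p = p - 1 := by
          apply mod_helper (by omega) (by omega)
          obtain ⟨K, hK⟩ := hdN
          have h3 : p ∣ p ^ (t' + 1) := dvd_pow_self p (by omega)
          have h4 : p ∣ p ^ (c' + 1) := dvd_pow_self p (by omega)
          have : j + 1 = p ^ (t' + 1) - p ^ (c' + 1) - N := by omega
          rw [this, hK]
          exact Nat.dvd_sub (Nat.dvd_sub h3 h4) ⟨K, rfl⟩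
        rw [red0 hb0 hd, if_pos ⟨hdN, hjr⟩]
        obtain ⟨K, hK⟩ := hdN
        have hNp : N / p = K := by rw [hK]; exact Nat.mul_div_cancel_left K (by omega)
        have hqj : p * (j / p) + (p - 1) = j := by
          have h0 := Nat.div_add_mod j p; rw [hjr] at h0; exact h0
        have hppc : p ^ (c' + 1) = p * p ^ c' := by rw [pow_succ, mul_comm]
        have hqK : j / p + K + 1 + p ^ c' = p ^ t' := by
          apply pcancel (p := p)
          have heq : p * (j / p + K + 1 + p ^ c') =
              p * (j / p) + p * K + p + p * p ^ c' := by ring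
          rw [heq]
          rw [hppow, hppc] at hsum
          omega
        have hm' : p ^ (c' + m) = K + p ^ c' := by
          apply pcancel (p := p)
          have h5 : p * p ^ (c' + m) = p ^ ((c' + 1) + m) := by
            rw [show (c' + 1) + m = (c' + m) + 1 by omega, pow_succ, mul_comm]
          rw [h5, hm, hK, hppc]
          ring
        have hIH := ((IH t' (by omega)).2 c' (by omega) (j / p) K (by omega)).2 m hm'
        rw [hNp, hIH, ← pow_mul,
          show p ^ c' * p = p ^ (c' + 1) from (pow_succ p c').symm]

end Stmt3Aux

/-- For an odd prime `p`, all `t ≥ 1` and all `1 ≤ i ≤ p^t − 1`, the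
degree-`2(p^t − i − 1)` homogeneous component of `ξ̄^{i−1} ∈ B̂` equals `ξ_s` if
`i = p^t − p^s` for some `0 ≤ s ≤ t − 1` (with `ξ_0 = 1`), and equals `0` otherwise.
Here `Δ`, `ε` are the coproduct and counit of `B`, `χ` is its antipode, and `u` is `ξ̄`
regarded as a unit of `B̂`. -/


theorem stmt_3 (p : ℕ) [Fact p.Prime] (hodd : Odd p)
    (Δ : MvPolynomial ℕ (ZMod p) →ₐ[ZMod p]
      (MvPolynomial ℕ (ZMod p) ⊗[ZMod p] MvPolynomial ℕ (ZMod p)))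
    (hΔ : ∀ n : ℕ, 1 ≤ n → Δ (milnorXi p n) = milnorCoprodVal p n)
    (ε : MvPolynomial ℕ (ZMod p) →ₐ[ZMod p] ZMod p)
    (hε : ∀ n : ℕ, 1 ≤ n → ε (milnorXi p n) = 0)
    (χ : MvPolynomial ℕ (ZMod p) →ₗ[ZMod p] MvPolynomial ℕ (ZMod p))
    (hχ : ∀ x : MvPolynomial ℕ (ZMod p),
      (LinearMap.mul' (ZMod p) (MvPolynomial ℕ (ZMod p)))
          ((TensorProduct.map χ LinearMap.id) (Δ x)) =
        algebraMap (ZMod p) (MvPolynomial ℕ (ZMod p)) (ε x) ∧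
      (LinearMap.mul' (ZMod p) (MvPolynomial ℕ (ZMod p)))
          ((TensorProduct.map LinearMap.id χ) (Δ x)) =
        algebraMap (ZMod p) (MvPolynomial ℕ (ZMod p)) (ε x))
    (u : (PowerSeries (MvPolynomial ℕ (ZMod p)))ˣ)
    (hu : (u : PowerSeries (MvPolynomial ℕ (ZMod p))) = xiBar p χ)
    (t i : ℕ) (ht : 1 ≤ t) (hi1 : 1 ≤ i) (hi2 : i ≤ p ^ t - 1) :
    (∀ s : ℕ, s < t → i = p ^ t - p ^ s →
      PowerSeries.coeff (R := MvPolynomial ℕ (ZMod p)) (p ^ t - i - 1)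
          ((u ^ ((i : ℤ) - 1) : (PowerSeries (MvPolynomial ℕ (ZMod p)))ˣ) :
            PowerSeries (MvPolynomial ℕ (ZMod p))) =
        milnorXi p s) ∧
    ((∀ s : ℕ, s < t → i ≠ p ^ t - p ^ s) →
      PowerSeries.coeff (R := MvPolynomial ℕ (ZMod p)) (p ^ t - i - 1)
          ((u ^ ((i : ℤ) - 1) : (PowerSeries (MvPolynomial ℕ (ZMod p)))ˣ) :
            PowerSeries (MvPolynomial ℕ (ZMod p))) =
        0) := by
  classical
  have hple : 2 ≤ p := (Fact.out : p.Prime).two_le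
  set b : ℕ → MvPolynomial ℕ (ZMod p) := fun n => χ (milnorXi p n) with hb
  have hb0 : b 0 = 1 := by
    have hχ1 := (hχ 1).1
    rw [map_one Δ, Algebra.TensorProduct.one_def, TensorProduct.map_tmul,
      LinearMap.mul'_apply, LinearMap.id_coe, id_eq, mul_one, map_one ε] at hχ1
    have h1 : χ 1 = 1 := by simpa using hχ1
    show χ (milnorXi p 0) = 1
    rw [show milnorXi p 0 = 1 from if_pos rfl, h1]
  have hrec : ∀ u, 1 ≤ u →
      ∑ k ∈ Finset.range (u + 1), (milnorXi p (u - k)) ^ (p ^ k) * b k = 0 := by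
    intro u hu
    have hχ2 := (hχ (milnorXi p u)).2
    rw [hΔ u hu, hε u hu, map_zero] at hχ2
    unfold milnorCoprodVal at hχ2
    rw [map_sum, map_sum] at hχ2
    simp only [TensorProduct.map_tmul, LinearMap.mul'_apply, LinearMap.id_coe, id_eq] at hχ2
    exact hχ2
  have hxb : xiBar p χ = Stmt3Aux.xb p b := rfl
  have hcoe : ((u ^ ((i : ℤ) - 1) : (PowerSeries (MvPolynomial ℕ (ZMod p)))ˣ) :
      PowerSeries (MvPolynomial ℕ (ZMod p))) = (Stmt3Aux.xb p b) ^ (i - 1) := by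
    have hcast : ((i : ℤ) - 1) = ((i - 1 : ℕ) : ℤ) := by omega
    rw [hcast, zpow_natCast, Units.val_pow_eq_pow_val, hu, hxb]
  have h2t : 2 ≤ p ^ t := le_trans hple (Nat.le_self_pow (by omega) p)
  have hmain := Stmt3Aux.main hb0 hrec t
  have heq : (i - 1) + (p ^ t - i - 1) + 1 + p ^ 0 = p ^ t := by
    rw [pow_zero]; omega
  have hP := hmain.2 0 (by omega) (i - 1) (p ^ t - i - 1) heq
  constructor
  · intro s hst his
    rw [hcoe]
    have hps : p ^ s ≤ p ^ t := Nat.pow_le_pow_right (by omega) (le_of_lt hst)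
    have hps1 : 1 ≤ p ^ s := Nat.one_le_pow _ _ (by omega)
    have hcond : p ^ (0 + s) = (p ^ t - i - 1) + p ^ 0 := by
      rw [zero_add, pow_zero]; omega
    have hval := hP.2 s hcond
    rw [hval, pow_zero, pow_one]
  · intro hno
    rw [hcoe]
    apply hP.1
    intro m hm
    rw [zero_add, pow_zero] at hm
    have hmlt : p ^ m < p ^ t := by omega
    have hmt : m < t := (Nat.pow_lt_pow_iff_right (by omega : 1 < p)).mp hmlt
    exact hno m hmt (by omega)
end
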